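/- arXiv:2410.16131 — 12 statements merged into one kernel-verified Lean document; each statement's English description precedes it below -/
import Mathlib

section
/- For every number of agents n, every finite multiset A of at least two candidate locations in ℝ, and every α ∈ [0,1/2] such that αn is a positive integer, the α-Statistic mechanism is strategyproof in the non-optional setting: for every position profile x = (x_1,…,x_n), every agent i and every misreport x_i′ ∈ ℝ, the utility of agent i (computed at her true position x_i) under the solution output on profile x is at least her utility under the solution output on the profile (x_i′, x_{−i}). -/
/-- The `k`-th smallest value (1-indexed) among the reported positions. -/
noncomputable def kthSmallest {n : ℕ} (x : Fin n → ℝ) (k : ℕ) : ℝ :=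
  ((List.ofFn x).insertionSort (· ≤ ·)).getD (k - 1) 0

/-- The `α`-Statistic mechanism with `α = a/n`: it considers the `a`-th and the `(n-a)`-th
leftmost reported positions, and outputs `(L, s xi)` if both have `L` as the farthest
candidate location, `(R, s xj)` if both have `R` as the farthest, and `(L, R)` otherwise. -/
noncomputable def alphaStat {n : ℕ} (L R : ℝ) (t s : ℝ → ℝ) (a : ℕ) (x : Fin n → ℝ) :
    ℝ × ℝ :=
  if t (kthSmallest x a) = L ∧ t (kthSmallest x (n - a)) = L then
    (L, s (kthSmallest x a))
  else if t (kthSmallest x a) = R ∧ t (kthSmallest x (n - a)) = R then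
    (R, s (kthSmallest x (n - a)))
  else (L, R)

/-- `t z` is a farthest element of the candidate multiset `A` from `z`, with ties broken
preferring `L`, then `R` (then some fixed ordering of the remaining locations). -/
def FarthestRule (A : Multiset ℝ) (L R : ℝ) (t : ℝ → ℝ) : Prop :=
  ∀ z : ℝ, t z ∈ A ∧ (∀ c ∈ A, |z - c| ≤ |z - t z|) ∧
    (|z - L| = |z - t z| → t z = L) ∧
    (|z - R| = |z - t z| → t z = L ∨ t z = R)

/-- `s z` is a second farthest element of `A` from `z` (a farthest element of `A` after
removing one copy of `t z`), with ties broken preferring `L`, then `R`. -/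
def SecondFarthestRule (A : Multiset ℝ) (L R : ℝ) (t s : ℝ → ℝ) : Prop :=
  ∀ z : ℝ, s z ∈ A.erase (t z) ∧ (∀ c ∈ A.erase (t z), |z - c| ≤ |z - s z|) ∧
    (L ∈ A.erase (t z) → |z - L| = |z - s z| → s z = L) ∧
    (R ∈ A.erase (t z) → |z - R| = |z - s z| → s z = L ∨ s z = R)

/-- Utility of an agent at position `xi` in the non-optional setting: total distance to
the two facility locations. -/
noncomputable def util (xi : ℝ) (y : ℝ × ℝ) : ℝ := |xi - y.1| + |xi - y.2|

/-- Social welfare of the solution `y`: total utility of the agents. -/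
noncomputable def sw {n : ℕ} (x : Fin n → ℝ) (y : ℝ × ℝ) : ℝ := ∑ i, util (x i) y

/-! ### Auxiliary counting lemmas for order statistics -/

lemma countP_le_of_sorted (l : List ℝ) (hl : l.Pairwise (· ≤ ·)) (k : ℕ) (hk : k < l.length)
    (p : ℝ → Bool) (h : ∀ y, p y = true → y < l[k]) : l.countP p ≤ k := by
  have hsplit : l.countP p = (l.take k).countP p + (l.drop k).countP p := by
    conv_lhs => rw [← List.take_append_drop k l]
    exact List.countP_append
  have hdrop : (l.drop k).countP p = 0 := by
    rw [List.countP_eq_zero]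
    intro a ha
    obtain ⟨j, hj, hja⟩ := List.mem_iff_getElem.1 ha
    have hjd : j < l.length - k := by simpa [List.length_drop] using hj
    have hjl : k + j < l.length := by omega
    have hja' : a = l[k + j] := by rw [← hja, List.getElem_drop]
    intro hp
    have h1 := h _ hp
    rw [hja'] at h1
    have hle : l[k] ≤ l[k + j] := by
      rcases Nat.eq_zero_or_pos j with rfl | hj0
      · simp
      · exact List.pairwise_iff_getElem.1 hl k (k+j) hk hjl (by omega)
    linarith
  have htake : (l.take k).countP p ≤ k := by
    calc (l.take k).countP p ≤ (l.take k).length := List.countP_le_length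
    _ ≤ k := by simp
  omega

lemma le_countP_of_sorted (l : List ℝ) (hl : l.Pairwise (· ≤ ·)) (k : ℕ) (hk : k < l.length)
    (p : ℝ → Bool) (h : ∀ y, y ≤ l[k] → p y = true) : k + 1 ≤ l.countP p := by
  have hlen : (l.take (k+1)).length = k + 1 := by
    simp only [List.length_take]; omega
  have htake : (l.take (k+1)).countP p = (l.take (k+1)).length := by
    rw [List.countP_eq_length]
    intro a ha
    obtain ⟨j, hj, hja⟩ := List.mem_take_iff_getElem.1 ha
    have hjk : j ≤ k := by
      have := hj; simp at this; omega
    apply h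
    rw [← hja]
    rcases Nat.lt_or_ge j k with hlt | hge
    · exact List.pairwise_iff_getElem.1 hl j k (by omega) hk hlt
    · have hje : j = k := by omega
      subst hje; exact le_refl _
  have hsplit : l.countP p = (l.take (k+1)).countP p + (l.drop (k+1)).countP p := by
    conv_lhs => rw [← List.take_append_drop (k+1) l]
    exact List.countP_append
  omega

lemma countP_ofFn {n : ℕ} (x : Fin n → ℝ) (p : ℝ → Bool) :
    (List.ofFn x).countP p = ∑ j : Fin n, (if p (x j) then 1 else 0) := by
  induction n with
  | zero => simp
  | succ m ih =>
    rw [List.ofFn_succ, List.countP_cons, Fin.sum_univ_succ, ih]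
    ring

lemma countP_update {n : ℕ} (x : Fin n → ℝ) (i : Fin n) (x' : ℝ) (p : ℝ → Bool) :
    (List.ofFn (Function.update x i x')).countP p + (if p (x i) then 1 else 0)
      = (List.ofFn x).countP p + (if p x' then 1 else 0) := by
  rw [countP_ofFn, countP_ofFn]
  have h1 : (fun j => if p (Function.update x i x' j) then 1 else 0)
      = Function.update (fun j => if p (x j) then 1 else 0) i (if p x' then 1 else 0) := by
    funext j
    by_cases hj : j = i
    · subst hj; simp [Function.update_self]
    · simp [Function.update_of_ne hj]
  have h2 : (fun j => if p (x j) then 1 else 0)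
      = Function.update (fun j => if p (x j) then 1 else 0) i (if p (x i) then 1 else 0) := by
    funext j
    by_cases hj : j = i
    · subst hj; simp
    · simp [Function.update_of_ne hj]
  calc (∑ j : Fin n, if p (Function.update x i x' j) then 1 else 0) + (if p (x i) then 1 else 0)
      = (∑ j : Fin n, Function.update (fun j => if p (x j) then 1 else 0) i
          (if p x' then 1 else 0) j) + (if p (x i) then 1 else 0) := by rw [h1]
    _ = ((if p x' then 1 else 0) + ∑ j ∈ Finset.univ \ {i}, (if p (x j) then 1 else 0))
          + (if p (x i) then 1 else 0) := by
        rw [Finset.sum_update_of_mem (Finset.mem_univ i)]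
    _ = (∑ j : Fin n, if p (x j) then 1 else 0) + (if p x' then 1 else 0) := by
        conv_rhs => rw [h2, Finset.sum_update_of_mem (Finset.mem_univ i)]
        ring

/-! ### Properties of `kthSmallest` -/

lemma sortLength {n : ℕ} (x : Fin n → ℝ) :
    ((List.ofFn x).insertionSort (· ≤ ·)).length = n := by
  rw [(List.perm_insertionSort _ _).length_eq, List.length_ofFn]

lemma kthSmallest_eq_get {n : ℕ} (x : Fin n → ℝ) (k : ℕ) (hk1 : 1 ≤ k) (hk2 : k ≤ n) :
    kthSmallest x k
      = ((List.ofFn x).insertionSort (· ≤ ·))[k-1]'(by rw [sortLength]; omega) := by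
  unfold kthSmallest
  exact List.getD_eq_getElem _ _ _

lemma kthSmallest_mono {n : ℕ} (x : Fin n → ℝ) (k k' : ℕ) (hk1 : 1 ≤ k) (hkk : k ≤ k')
    (hk2 : k' ≤ n) : kthSmallest x k ≤ kthSmallest x k' := by
  rw [kthSmallest_eq_get x k hk1 (le_trans hkk hk2),
    kthSmallest_eq_get x k' (le_trans hk1 hkk) hk2]
  have hs := List.pairwise_insertionSort (· ≤ ·) (List.ofFn x)
  rcases Nat.lt_or_ge (k-1) (k'-1) with hlt | hge
  · exact List.pairwise_iff_getElem.1 hs _ _ _ _ hlt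
  · have : k - 1 = k' - 1 := by omega
    simp [this]

lemma kth_up {n : ℕ} (x : Fin n → ℝ) (i : Fin n) (x' : ℝ) (k : ℕ) (hk1 : 1 ≤ k) (hk2 : k ≤ n)
    (hxi : x i < kthSmallest x k) :
    kthSmallest x k ≤ kthSmallest (Function.update x i x') k := by
  set S := (List.ofFn x).insertionSort (· ≤ ·) with hS
  set S' := (List.ofFn (Function.update x i x')).insertionSort (· ≤ ·) with hS'
  have hlen : S.length = n := sortLength x
  have hlen' : S'.length = n := sortLength _
  have hk : k - 1 < S.length := by omega
  have hk' : k - 1 < S'.length := by omega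
  rw [kthSmallest_eq_get x k hk1 hk2] at hxi ⊢
  rw [kthSmallest_eq_get _ k hk1 hk2]
  set v := S[k-1] with hv
  set p : ℝ → Bool := fun y => decide (y < v) with hp
  have hcS : S.countP p ≤ k - 1 := by
    apply countP_le_of_sorted S (List.pairwise_insertionSort _ _) (k-1) hk
    intro y hy
    simpa [hp] using hy
  have hpermS : S.countP p = (List.ofFn x).countP p := (List.perm_insertionSort _ _).countP_eq p
  have hpermS' : S'.countP p = (List.ofFn (Function.update x i x')).countP p :=
    (List.perm_insertionSort _ _).countP_eq p
  have hcu := countP_update x i x' p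
  have hpi : (if p (x i) then 1 else 0) = 1 := by simp [hp, hxi]
  have hcS' : S'.countP p ≤ k - 1 := by
    have h1 : (if p x' then 1 else 0) ≤ 1 := by split <;> omega
    omega
  by_contra hcon
  push_neg at hcon
  have := le_countP_of_sorted S' (List.pairwise_insertionSort _ _) (k-1) hk' p ?_
  · omega
  · intro y hy
    simp only [hp, decide_eq_true_eq]
    exact lt_of_le_of_lt hy hcon

lemma kth_down {n : ℕ} (x : Fin n → ℝ) (i : Fin n) (x' : ℝ) (k : ℕ) (hk1 : 1 ≤ k) (hk2 : k ≤ n)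
    (hxi : kthSmallest x k < x i) :
    kthSmallest (Function.update x i x') k ≤ kthSmallest x k := by
  set S := (List.ofFn x).insertionSort (· ≤ ·) with hS
  set S' := (List.ofFn (Function.update x i x')).insertionSort (· ≤ ·) with hS'
  have hlen : S.length = n := sortLength x
  have hlen' : S'.length = n := sortLength _
  have hk : k - 1 < S.length := by omega
  have hk' : k - 1 < S'.length := by omega
  rw [kthSmallest_eq_get x k hk1 hk2] at hxi ⊢
  rw [kthSmallest_eq_get _ k hk1 hk2]
  set v := S[k-1] with hv
  set p : ℝ → Bool := fun y => decide (y ≤ v) with hp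
  have hcS : k ≤ S.countP p := by
    have := le_countP_of_sorted S (List.pairwise_insertionSort _ _) (k-1) hk p ?_
    · omega
    · intro y hy; simpa [hp] using hy
  have hpermS : S.countP p = (List.ofFn x).countP p := (List.perm_insertionSort _ _).countP_eq p
  have hpermS' : S'.countP p = (List.ofFn (Function.update x i x')).countP p :=
    (List.perm_insertionSort _ _).countP_eq p
  have hcu := countP_update x i x' p
  have hpi : (if p (x i) then 1 else 0) = 0 := by simp [hp]; linarith
  have hcS' : k ≤ S'.countP p := by
    have h1 : (0:ℕ) ≤ (if p x' then 1 else 0) := by omega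
    omega
  by_contra hcon
  push_neg at hcon
  have := countP_le_of_sorted S' (List.pairwise_insertionSort _ _) (k-1) hk' p ?_
  · omega
  · intro y hy
    simp only [hp, decide_eq_true_eq] at hy
    exact lt_of_le_of_lt hy hcon

/-! ### Geometric lemmas -/

lemma farthest_compare_left {B : Multiset ℝ} {z z' w u v : ℝ} (hu : u ∈ B) (hv : v ∈ B)
    (hmu : ∀ c ∈ B, |z - c| ≤ |z - u|) (hmv : ∀ c ∈ B, |z' - c| ≤ |z' - v|)
    (hzz : z' < z) (hw : z ≤ w) : |w - v| ≤ |w - u| := by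
  rcases le_or_gt u z with h | h
  · have h1 : |z - v| ≤ |z - u| := hmu v hv
    have h2 : |z - u| = z - u := abs_of_nonneg (by linarith)
    have h3 : |w - v| ≤ |w - z| + |z - v| := abs_sub_le w z v
    have h4 : |w - z| = w - z := abs_of_nonneg (by linarith)
    have h5 : |w - u| = w - u := abs_of_nonneg (by linarith)
    linarith
  · have h2 : |z - u| = u - z := by rw [abs_sub_comm]; exact abs_of_nonneg (by linarith)
    have hvu : v ≤ u := by
      have h1 : |z - v| ≤ |z - u| := hmu v hv
      have h3 : v - z ≤ |z - v| := by rw [abs_sub_comm]; exact le_abs_self _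
      linarith
    have h6 : |z' - u| ≤ |z' - v| := hmv u hu
    have h7 : |z' - u| = u - z' := by rw [abs_sub_comm]; exact abs_of_nonneg (by linarith)
    rcases le_or_gt z' v with h8 | h8
    · have h9 : |z' - v| = v - z' := by rw [abs_sub_comm]; exact abs_of_nonneg (by linarith)
      have : v = u := le_antisymm hvu (by linarith)
      rw [this]
    · exfalso
      have h9 : |z' - v| = z' - v := abs_of_nonneg (by linarith)
      have h10 : |z - v| ≤ |z - u| := hmu v hv
      have h11 : |z - v| = z - v := abs_of_nonneg (by linarith)
      linarith

lemma farthest_compare_right {B : Multiset ℝ} {z z' w u v : ℝ} (hu : u ∈ B) (hv : v ∈ B)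
    (hmu : ∀ c ∈ B, |z - c| ≤ |z - u|) (hmv : ∀ c ∈ B, |z' - c| ≤ |z' - v|)
    (hzz : z < z') (hw : w ≤ z) : |w - v| ≤ |w - u| := by
  rcases le_or_gt z u with h | h
  · have h1 : |z - v| ≤ |z - u| := hmu v hv
    have h2 : |z - u| = u - z := by rw [abs_sub_comm]; exact abs_of_nonneg (by linarith)
    have h3 : |w - v| ≤ |w - z| + |z - v| := abs_sub_le w z v
    have h4 : |w - z| = z - w := by rw [abs_sub_comm]; exact abs_of_nonneg (by linarith)
    have h5 : |w - u| = u - w := by rw [abs_sub_comm]; exact abs_of_nonneg (by linarith)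
    linarith
  · have h2 : |z - u| = z - u := abs_of_nonneg (by linarith)
    have hvu : u ≤ v := by
      have h1 : |z - v| ≤ |z - u| := hmu v hv
      have h3 : z - v ≤ |z - v| := le_abs_self _
      linarith
    have h6 : |z' - u| ≤ |z' - v| := hmv u hu
    have h7 : |z' - u| = z' - u := abs_of_nonneg (by linarith)
    rcases le_or_gt v z' with h8 | h8
    · have h9 : |z' - v| = z' - v := abs_of_nonneg (by linarith)
      have : v = u := le_antisymm (by linarith) hvu
      rw [this]
    · exfalso
      have h9 : |z' - v| = v - z' := by rw [abs_sub_comm]; exact abs_of_nonneg (by linarith)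
      have h10 : |z - v| ≤ |z - u| := hmu v hv
      have h11 : |z - v| = v - z := by rw [abs_sub_comm]; exact abs_of_nonneg (by linarith)
      linarith

lemma far_beats_R {R z w u : ℝ} (huR : u ≤ R) (hm : |z - R| ≤ |z - u|) (hw : z ≤ w) :
    |w - R| ≤ |w - u| := by
  rcases le_or_gt u z with h | h
  · have h2 : |z - u| = z - u := abs_of_nonneg (by linarith)
    have h3 : |w - R| ≤ |w - z| + |z - R| := abs_sub_le w z R
    have h4 : |w - z| = w - z := abs_of_nonneg (by linarith)
    have h5 : |w - u| = w - u := abs_of_nonneg (by linarith)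
    linarith
  · have h2 : |z - u| = u - z := by rw [abs_sub_comm]; exact abs_of_nonneg (by linarith)
    have h3 : |z - R| = R - z := by rw [abs_sub_comm]; exact abs_of_nonneg (by linarith)
    have : u = R := le_antisymm huR (by linarith)
    rw [this]

lemma far_beats_L {L z w u : ℝ} (huL : L ≤ u) (hm : |z - L| ≤ |z - u|) (hw : w ≤ z) :
    |w - L| ≤ |w - u| := by
  rcases le_or_gt z u with h | h
  · have h2 : |z - u| = u - z := by rw [abs_sub_comm]; exact abs_of_nonneg (by linarith)
    have h3 : |w - L| ≤ |w - z| + |z - L| := abs_sub_le w z L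
    have h4 : |w - z| = z - w := by rw [abs_sub_comm]; exact abs_of_nonneg (by linarith)
    have h5 : |w - u| = u - w := by rw [abs_sub_comm]; exact abs_of_nonneg (by linarith)
    linarith
  · have h2 : |z - u| = z - u := abs_of_nonneg (by linarith)
    have h3 : |z - L| = z - L := abs_of_nonneg (by linarith)
    have : u = L := le_antisymm (by linarith) huL
    rw [this]

lemma right_half_L_far {L R w c : ℝ} (h : L + R ≤ 2 * w) (hc1 : L ≤ c) (hc2 : c ≤ R) :
    |w - c| ≤ |w - L| := by
  have h1 : |w - L| = w - L := abs_of_nonneg (by linarith)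
  rw [h1, abs_le]
  constructor <;> linarith

lemma left_half_R_far {L R w c : ℝ} (h : 2 * w ≤ L + R) (hc1 : L ≤ c) (hc2 : c ≤ R) :
    |w - c| ≤ |w - R| := by
  have h1 : |w - R| = R - w := by rw [abs_sub_comm]; exact abs_of_nonneg (by linarith)
  rw [h1, abs_le]
  constructor <;> linarith

/-- When all agents are affected by both facilities, the `α`-Statistic mechanism
(with `α = a/n ∈ (0, 1/2]`) is strategyproof: no agent can increase her utility
by misreporting her position. -/
theorem alphaStatistic_strategyproof
    (n a : ℕ) (ha1 : 1 ≤ a) (ha2 : 2 * a ≤ n)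
    (A : Multiset ℝ) (hA : 2 ≤ Multiset.card A)
    (L R : ℝ) (hLA : L ∈ A) (hRA : R ∈ A)
    (hLmin : ∀ c ∈ A, L ≤ c) (hRmax : ∀ c ∈ A, c ≤ R)
    (t s : ℝ → ℝ) (ht : FarthestRule A L R t) (hs : SecondFarthestRule A L R t s)
    (x : Fin n → ℝ) (i : Fin n) (x' : ℝ) :
    util (x i) (alphaStat L R t s a (Function.update x i x')) ≤
      util (x i) (alphaStat L R t s a x) := by
  classical
  have hk1 : 1 ≤ a := ha1
  have hk2 : a ≤ n := by omega
  have hj1 : 1 ≤ n - a := by omega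
  have hj2 : n - a ≤ n := by omega
  have hsmem : ∀ z, s z ∈ A := fun z => Multiset.mem_of_mem_erase (hs z).1
  have hsLb : ∀ z, L ≤ s z := fun z => hLmin _ (hsmem z)
  have hsRb : ∀ z, s z ≤ R := fun z => hRmax _ (hsmem z)
  have hLRle : L ≤ R := hLmin R hRA
  rcases eq_or_lt_of_le hLRle with hLR | hLR
  · -- degenerate case L = R
    have hsc : ∀ z, s z = L := fun z => le_antisymm (by rw [hLR]; exact hsRb z) (hsLb z)
    simp only [alphaStat, ← hLR]
    split_ifs <;> simp [util, hsc]
  · -- main case L < R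
    have hRL : R ≠ L := ne_of_gt hLR
    have hLRne : L ≠ R := ne_of_lt hLR
    have htL : ∀ z, L + R ≤ 2*z → t z = L := by
      intro z hz
      obtain ⟨htm, htmax, htieL, _⟩ := ht z
      apply htieL
      have h1 : |z - L| ≤ |z - t z| := htmax L hLA
      have h2 : |z - t z| ≤ |z - L| := by
        have hL1 := hLmin _ htm
        have hR1 := hRmax _ htm
        have h3 : |z - L| = z - L := abs_of_nonneg (by linarith)
        rw [h3, abs_le]; constructor <;> linarith
      exact le_antisymm h1 h2
    have htR : ∀ z, 2*z < L + R → t z = R := by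
      intro z hz
      obtain ⟨htm, htmax, htieL, htieR⟩ := ht z
      have h1 : |z - R| ≤ |z - t z| := htmax R hRA
      have hzR : |z - R| = R - z := by rw [abs_sub_comm]; exact abs_of_nonneg (by linarith)
      have h2 : |z - t z| ≤ |z - R| := by
        have hL1 := hLmin _ htm
        have hR1 := hRmax _ htm
        rw [hzR, abs_le]; constructor <;> linarith
      have heq : |z - R| = |z - t z| := le_antisymm h1 h2
      rcases htieR heq with hLc | hRc
      · exfalso
        rw [hLc] at heq
        rcases le_or_gt L z with h | h
        · have h4 : |z - L| = z - L := abs_of_nonneg (by linarith)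
          rw [hzR, h4] at heq
          linarith
        · have h4 : |z - L| = L - z := by rw [abs_sub_comm]; exact abs_of_nonneg (by linarith)
          rw [hzR, h4] at heq
          linarith
      · exact hRc
    have htLinv : ∀ z, t z = L → L + R ≤ 2*z := by
      intro z h
      by_contra hc
      push_neg at hc
      have h2 := htR z hc
      rw [h2] at h
      exact hRL h
    have htRinv : ∀ z, t z = R → 2*z < L + R := by
      intro z h
      by_contra hc
      push_neg at hc
      have h2 := htL z hc
      rw [h2] at h
      exact hLRne h
    have hsmemL : ∀ z, t z = L → s z ∈ A.erase L := by
      intro z h; have := (hs z).1; rwa [h] at this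
    have hsmemR : ∀ z, t z = R → s z ∈ A.erase R := by
      intro z h; have := (hs z).1; rwa [h] at this
    have hsmaxL : ∀ z, t z = L → ∀ c ∈ A.erase L, |z - c| ≤ |z - s z| := by
      intro z h c hc
      exact (hs z).2.1 c (by rw [h]; exact hc)
    have hsmaxR : ∀ z, t z = R → ∀ c ∈ A.erase R, |z - c| ≤ |z - s z| := by
      intro z h c hc
      exact (hs z).2.1 c (by rw [h]; exact hc)
    have hRmemE : R ∈ A.erase L := (Multiset.mem_erase_of_ne hRL).2 hRA
    have hLmemE : L ∈ A.erase R := (Multiset.mem_erase_of_ne hLRne).2 hLA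
    have hsfarR : ∀ z, t z = L → |z - R| ≤ |z - s z| := fun z h => hsmaxL z h R hRmemE
    have hsfarL : ∀ z, t z = R → |z - L| ≤ |z - s z| := fun z h => hsmaxR z h L hLmemE
    simp only [alphaStat]
    set P := kthSmallest x a with hPdef
    set Q := kthSmallest x (n-a) with hQdef
    set P' := kthSmallest (Function.update x i x') a with hP'def
    set Q' := kthSmallest (Function.update x i x') (n-a) with hQ'def
    have hPQ : P ≤ Q := kthSmallest_mono x a (n-a) ha1 (by omega) (by omega)
    have hPup : x i < P → P ≤ P' := kth_up x i x' a hk1 hk2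
    have hPdn : P < x i → P' ≤ P := kth_down x i x' a hk1 hk2
    have hQup : x i < Q → Q ≤ Q' := kth_up x i x' (n-a) hj1 hj2
    have hQdn : Q < x i → Q' ≤ Q := kth_down x i x' (n-a) hj1 hj2
    have hcase : ∀ z : ℝ, t z = L ∨ t z = R := by
      intro z
      rcases le_or_gt (L+R) (2*z) with h | h
      exacts [Or.inl (htL z h), Or.inr (htR z h)]
    rcases hcase P with hP | hP <;> rcases hcase Q with hQ | hQ <;>
      rcases hcase P' with hP' | hP' <;> rcases hcase Q' with hQ' | hQ'
    -- case (L,L; L,L)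
    · have key : |x i - s P'| ≤ |x i - s P| := by
        rcases lt_trichotomy P' P with h | h | h
        · refine farthest_compare_left (hsmemL P hP) (hsmemL P' hP')
            (hsmaxL P hP) (hsmaxL P' hP') h ?_
          by_contra hc
          push_neg at hc
          exact absurd (hPup hc) (not_le.2 h)
        · rw [h]
        · refine farthest_compare_right (hsmemL P hP) (hsmemL P' hP')
            (hsmaxL P hP) (hsmaxL P' hP') h ?_
          by_contra hc
          push_neg at hc
          exact absurd (hPdn hc) (not_le.2 h)
      simp [hP, hQ, hP', hQ', hRL, hLRne, util]
      linarith
    -- case (L,L; L,R)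
    · have hQQ : Q' < Q := by
        have h1 := htRinv Q' hQ'
        have h2 := htLinv Q hQ
        linarith
      have hwi : Q ≤ x i := by
        by_contra hc
        push_neg at hc
        exact absurd (hQup hc) (not_le.2 hQQ)
      have key : |x i - R| ≤ |x i - s P| :=
        far_beats_R (hsRb P) (hsfarR P hP) (le_trans hPQ hwi)
      simp [hP, hQ, hP', hQ', hRL, hLRne, util]
      linarith
    -- case (L,L; R,L)
    · have hPP : P' < P := by
        have h1 := htRinv P' hP'
        have h2 := htLinv P hP
        linarith
      have hwi : P ≤ x i := by
        by_contra hc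
        push_neg at hc
        exact absurd (hPup hc) (not_le.2 hPP)
      have key : |x i - R| ≤ |x i - s P| := far_beats_R (hsRb P) (hsfarR P hP) hwi
      simp [hP, hQ, hP', hQ', hRL, hLRne, util]
      linarith
    -- case (L,L; R,R)
    · have hQQ : Q' < Q := by
        have h1 := htRinv Q' hQ'
        have h2 := htLinv Q hQ
        linarith
      have hwi : Q ≤ x i := by
        by_contra hc
        push_neg at hc
        exact absurd (hQup hc) (not_le.2 hQQ)
      have h2xi : L + R ≤ 2 * x i := by
        have := htLinv Q hQ
        linarith
      have k1 : |x i - s Q'| ≤ |x i - L| := right_half_L_far h2xi (hsLb Q') (hsRb Q')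
      have k2 : |x i - R| ≤ |x i - s P| :=
        far_beats_R (hsRb P) (hsfarR P hP) (le_trans hPQ hwi)
      simp [hP, hQ, hP', hQ', hRL, hLRne, util]
      linarith
    -- cases (L,R; *,*): impossible
    · exfalso
      have h1 := htLinv P hP
      have h2 := htRinv Q hQ
      linarith
    · exfalso
      have h1 := htLinv P hP
      have h2 := htRinv Q hQ
      linarith
    · exfalso
      have h1 := htLinv P hP
      have h2 := htRinv Q hQ
      linarith
    · exfalso
      have h1 := htLinv P hP
      have h2 := htRinv Q hQ
      linarith
    -- case (R,L; L,L)
    · have hPP : P < P' := by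
        have h1 := htLinv P' hP'
        have h2 := htRinv P hP
        linarith
      have hwi : x i ≤ P := by
        by_contra hc
        push_neg at hc
        exact absurd (hPdn hc) (not_le.2 hPP)
      have h2xi : 2 * x i ≤ L + R := by
        have := htRinv P hP
        linarith
      have key : |x i - s P'| ≤ |x i - R| := left_half_R_far h2xi (hsLb P') (hsRb P')
      simp [hP, hQ, hP', hQ', hRL, hLRne, util]
      linarith
    -- case (R,L; L,R): outputs both (L,R)
    · simp [hP, hQ, hP', hQ', hRL, hLRne, util]
    -- case (R,L; R,L): outputs both (L,R)
    · simp [hP, hQ, hP', hQ', hRL, hLRne, util]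
    -- case (R,L; R,R)
    · have hQQ : Q' < Q := by
        have h1 := htRinv Q' hQ'
        have h2 := htLinv Q hQ
        linarith
      have hwi : Q ≤ x i := by
        by_contra hc
        push_neg at hc
        exact absurd (hQup hc) (not_le.2 hQQ)
      have h2xi : L + R ≤ 2 * x i := by
        have := htLinv Q hQ
        linarith
      have key : |x i - s Q'| ≤ |x i - L| := right_half_L_far h2xi (hsLb Q') (hsRb Q')
      simp [hP, hQ, hP', hQ', hRL, hLRne, util]
      linarith
    -- case (R,R; L,L)
    · have hPP : P < P' := by
        have h1 := htLinv P' hP'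
        have h2 := htRinv P hP
        linarith
      have hwi : x i ≤ P := by
        by_contra hc
        push_neg at hc
        exact absurd (hPdn hc) (not_le.2 hPP)
      have h2xi : 2 * x i ≤ L + R := by
        have := htRinv P hP
        linarith
      have k1 : |x i - s P'| ≤ |x i - R| := left_half_R_far h2xi (hsLb P') (hsRb P')
      have k2 : |x i - L| ≤ |x i - s Q| :=
        far_beats_L (hsLb Q) (hsfarL Q hQ) (le_trans hwi hPQ)
      simp [hP, hQ, hP', hQ', hRL, hLRne, util]
      linarith
    -- case (R,R; L,R)
    · have hPP : P < P' := by
        have h1 := htLinv P' hP'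
        have h2 := htRinv P hP
        linarith
      have hwi : x i ≤ P := by
        by_contra hc
        push_neg at hc
        exact absurd (hPdn hc) (not_le.2 hPP)
      have key : |x i - L| ≤ |x i - s Q| :=
        far_beats_L (hsLb Q) (hsfarL Q hQ) (le_trans hwi hPQ)
      simp [hP, hQ, hP', hQ', hRL, hLRne, util]
      linarith
    -- case (R,R; R,L)
    · have hQQ : Q < Q' := by
        have h1 := htLinv Q' hQ'
        have h2 := htRinv Q hQ
        linarith
      have hwi : x i ≤ Q := by
        by_contra hc
        push_neg at hc
        exact absurd (hQdn hc) (not_le.2 hQQ)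
      have key : |x i - L| ≤ |x i - s Q| := far_beats_L (hsLb Q) (hsfarL Q hQ) hwi
      simp [hP, hQ, hP', hQ', hRL, hLRne, util]
      linarith
    -- case (R,R; R,R)
    · have key : |x i - s Q'| ≤ |x i - s Q| := by
        rcases lt_trichotomy Q' Q with h | h | h
        · refine farthest_compare_left (hsmemR Q hQ) (hsmemR Q' hQ')
            (hsmaxR Q hQ) (hsmaxR Q' hQ') h ?_
          by_contra hc
          push_neg at hc
          exact absurd (hQup hc) (not_le.2 h)
        · rw [h]
        · refine farthest_compare_right (hsmemR Q hQ) (hsmemR Q' hQ')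
            (hsmaxR Q hQ) (hsmaxR Q' hQ') h ?_
          by_contra hc
          push_neg at hc
          exact absurd (hQdn hc) (not_le.2 h)
      simp [hP, hQ, hP', hQ', hRL, hLRne, util]
      linarith
end

section
/- In the non-optional setting, the approximation ratio of every deterministic strategyproof mechanism is at least √3: for every real γ < √3 there exists a number of agents n such that for every deterministic strategyproof mechanism M for n agents with candidate multiset A = {0,0,2,2}, there exists a position profile x ∈ ℝⁿ with max over (y_1,y_2) ∈ {0,2}² of SW(y_1,y_2) ≥ γ · SW(M(x)). -/
lemma util_nonneg (t : ℝ) (y : ℝ × ℝ) : 0 ≤ util t y := by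
  unfold util; positivity

lemma util_formula (t : ℝ) (ht0 : 0 ≤ t) (ht2 : t ≤ 2) (y : ℝ × ℝ)
    (h1 : y.1 ∈ ({0, 2} : Set ℝ)) (h2 : y.2 ∈ ({0, 2} : Set ℝ)) :
    util t y = (y.1 + y.2) + (2 - (y.1 + y.2)) * t := by
  simp only [Set.mem_insert_iff, Set.mem_singleton_iff] at h1 h2
  have habs0 : |t - (0:ℝ)| = t := by rw [sub_zero, abs_of_nonneg ht0]
  have habs2 : |t - (2:ℝ)| = 2 - t := by
    rw [abs_of_nonpos (by linarith)]; ring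
  rcases h1 with h1 | h1 <;> rcases h2 with h2 | h2 <;>
    simp only [util, h1, h2, habs0, habs2] <;> ring

lemma sum_update_eq {n : ℕ} (M : (Fin n → ℝ) → ℝ × ℝ)
    (hM : ∀ x, (M x).1 ∈ ({0, 2} : Set ℝ) ∧ (M x).2 ∈ ({0, 2} : Set ℝ))
    (hSP : ∀ (x : Fin n → ℝ) (i : Fin n) (x' : ℝ),
      util (x i) (M (Function.update x i x')) ≤ util (x i) (M x))
    (x : Fin n → ℝ) (i : Fin n) (t : ℝ)
    (hx0 : 0 ≤ x i) (hx2 : x i ≤ 2) (ht0 : 0 ≤ t) (ht2 : t ≤ 2)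
    (hside : 0 < (1 - x i) * (1 - t)) :
    (M (Function.update x i t)).1 + (M (Function.update x i t)).2
      = (M x).1 + (M x).2 := by
  set x' := Function.update x i t with hx'
  have h1 : util (x i) (M x') ≤ util (x i) (M x) := hSP x i t
  have hx'i : x' i = t := Function.update_self i t x
  have hback : Function.update x' i (x i) = x := by
    rw [hx', Function.update_idem, Function.update_eq_self]
  have h2 : util t (M x) ≤ util t (M x') := by
    have h := hSP x' i (x i)
    rwa [hx'i, hback] at h
  rw [util_formula (x i) hx0 hx2 (M x) (hM x).1 (hM x).2,
      util_formula (x i) hx0 hx2 (M x') (hM x').1 (hM x').2] at h1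
  rw [util_formula t ht0 ht2 (M x) (hM x).1 (hM x).2,
      util_formula t ht0 ht2 (M x') (hM x').1 (hM x').2] at h2
  rcases mul_pos_iff.mp hside with ⟨ha, hb⟩ | ⟨ha, hb⟩ <;>
    apply le_antisymm <;> nlinarith [h1, h2, ha, hb]

lemma sum_cell_const {n : ℕ} (M : (Fin n → ℝ) → ℝ × ℝ)
    (hM : ∀ x, (M x).1 ∈ ({0, 2} : Set ℝ) ∧ (M x).2 ∈ ({0, 2} : Set ℝ))
    (hSP : ∀ (x : Fin n → ℝ) (i : Fin n) (x' : ℝ),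
      util (x i) (M (Function.update x i x')) ≤ util (x i) (M x))
    (x x' : Fin n → ℝ)
    (hx : ∀ i, 0 ≤ x i ∧ x i ≤ 2)
    (hx' : ∀ i, 0 ≤ x' i ∧ x' i ≤ 2)
    (hside : ∀ i, 0 < (1 - x i) * (1 - x' i)) :
    (M x').1 + (M x').2 = (M x).1 + (M x).2 := by
  suffices H : ∀ T : Finset (Fin n), ∀ z : Fin n → ℝ,
      (∀ i, z i = x i ∨ z i = x' i) → (∀ i ∉ T, z i = x i) →
      (M z).1 + (M z).2 = (M x).1 + (M x).2 by
    exact H Finset.univ x' (fun i => Or.inr rfl)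
      (fun i hi => absurd (Finset.mem_univ i) hi)
  intro T
  induction T using Finset.induction_on with
  | empty =>
    intro z hz hzx
    have hzz : z = x := funext fun i => hzx i (Finset.notMem_empty i)
    rw [hzz]
  | insert a T ha IH =>
    intro z hz hzx
    set z' := Function.update z a (x a) with hz'def
    have hz'cases : ∀ i, z' i = x i ∨ z' i = x' i := by
      intro i
      by_cases h : i = a
      · subst h; left; rw [hz'def, Function.update_self]
      · rw [hz'def, Function.update_of_ne h]; exact hz i
    have hz'x : ∀ i ∉ T, z' i = x i := by
      intro i hi
      by_cases h : i = a
      · subst h; rw [hz'def, Function.update_self]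
      · have hni : i ∉ insert a T := by simp [h, hi]
        rw [hz'def, Function.update_of_ne h]; exact hzx i hni
    have hrec := IH z' hz'cases hz'x
    have hzz' : z = Function.update z' a (z a) := by
      rw [hz'def, Function.update_idem, Function.update_eq_self]
    have hz'a : z' a = x a := by rw [hz'def, Function.update_self]
    have hza01 : 0 ≤ z a ∧ z a ≤ 2 := by
      rcases hz a with h | h
      · rw [h]; exact hx a
      · rw [h]; exact hx' a
    have hsd : 0 < (1 - z' a) * (1 - z a) := by
      rw [hz'a]
      rcases hz a with h | h
      · rw [h]
        rcases mul_pos_iff.mp (hside a) with ⟨p, q⟩ | ⟨p, q⟩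
        · exact mul_pos p p
        · exact mul_pos_of_neg_of_neg p p
      · rw [h]; exact hside a
    calc (M z).1 + (M z).2
        = (M (Function.update z' a (z a))).1 + (M (Function.update z' a (z a))).2 := by
          rw [← hzz']
      _ = (M z').1 + (M z').2 :=
          sum_update_eq M hM hSP z' a (z a) (by rw [hz'a]; exact (hx a).1)
            (by rw [hz'a]; exact (hx a).2) hza01.1 hza01.2 hsd
      _ = (M x).1 + (M x).2 := hrec

lemma sw_split {n k : ℕ} (hk : k ≤ n) (A B : ℝ) (y : ℝ × ℝ) :
    sw (fun i : Fin n => if (i : ℕ) < k then A else B) y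
      = k * util A y + ((n - k : ℕ) : ℝ) * util B y := by
  unfold sw
  have hfun : ∀ i : Fin n, util (if (i:ℕ) < k then A else B) y
      = if (i:ℕ) < k then util A y else util B y := by
    intro i; by_cases h : (i:ℕ) < k <;> simp [h]
  rw [Finset.sum_congr rfl (fun i _ => hfun i)]
  rw [Fin.sum_univ_eq_sum_range (fun j => if j < k then util A y else util B y) n]
  rw [Finset.range_eq_Ico, ← Finset.sum_Ico_consecutive _ (Nat.zero_le k) hk]
  rw [Finset.sum_congr rfl (fun i hi => if_pos (Finset.mem_Ico.mp hi).2),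
      Finset.sum_congr rfl (fun i hi => if_neg (not_lt.mpr (Finset.mem_Ico.mp hi).1))]
  rw [Finset.sum_const, Finset.sum_const, Nat.card_Ico, Nat.card_Ico, Nat.sub_zero,
      nsmul_eq_mul, nsmul_eq_mul]

set_option maxHeartbeats 2000000 in
/-- When all agents are affected by both facilities, the approximation ratio of any
deterministic strategyproof mechanism is at least `√3`: for every `γ < √3` there is a
number of agents `n` such that every deterministic strategyproof mechanism for `n`
agents with candidate multiset `{0, 0, 2, 2}` has, on some position profile, optimal
social welfare at least `γ` times the social welfare of its output. -/
theorem deterministic_lower_bound_sqrt_three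
    (γ : ℝ) (hγ : γ < Real.sqrt 3) :
    ∃ n : ℕ, ∀ M : (Fin n → ℝ) → ℝ × ℝ,
      (∀ x, (M x).1 ∈ ({0, 2} : Set ℝ) ∧ (M x).2 ∈ ({0, 2} : Set ℝ)) →
      (∀ (x : Fin n → ℝ) (i : Fin n) (x' : ℝ),
        util (x i) (M (Function.update x i x')) ≤ util (x i) (M x)) →
      ∃ x : Fin n → ℝ, ∃ y : ℝ × ℝ,
        y.1 ∈ ({0, 2} : Set ℝ) ∧ y.2 ∈ ({0, 2} : Set ℝ) ∧
        γ * sw x (M x) ≤ sw x y := by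
  by_cases hγ1 : γ ≤ 1
  · refine ⟨1, fun M hM hSP => ?_⟩
    refine ⟨fun _ => 0, M (fun _ => 0), (hM _).1, (hM _).2, ?_⟩
    have h0 : 0 ≤ sw (fun _ : Fin 1 => (0:ℝ)) (M fun _ => 0) :=
      Finset.sum_nonneg fun i _ => util_nonneg _ _
    nlinarith
  push_neg at hγ1
  have hγp : (0:ℝ) < γ + 1 := by linarith
  have hγ3 : γ ^ 2 < 3 := by
    have h := (Real.lt_sqrt (by linarith : (0:ℝ) ≤ γ)).mp hγ
    linarith
  set β : ℝ := (γ - 1) / (γ + 1) with hβ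
  set ε : ℝ := (3 - γ ^ 2) / (γ + 1) with hε
  have hεpos : 0 < ε := div_pos (by nlinarith) hγp
  obtain ⟨n, hn3⟩ := exists_nat_ge (3 / ε)
  have hεn : 3 ≤ ε * n := by
    rw [div_le_iff₀ hεpos] at hn3; linarith
  refine ⟨n, fun M hM hSP => ?_⟩
  have hβ0 : 0 ≤ β := div_nonneg (by linarith) hγp.le
  have hβn0 : 0 ≤ β * (n:ℝ) := by positivity
  obtain ⟨k, hk1, hkup⟩ : ∃ k : ℕ, β * n + 1 ≤ (k : ℝ) ∧ (k : ℝ) ≤ β * n + 2 := by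
    refine ⟨⌈β * (n:ℝ)⌉₊ + 1, ?_, ?_⟩
    · have h := Nat.le_ceil (β * (n:ℝ))
      rw [Nat.cast_add, Nat.cast_one]; linarith
    · have h := Nat.ceil_lt_add_one hβn0
      rw [Nat.cast_add, Nat.cast_one]; linarith
  have hβε : β + ε = 2 - γ := by
    rw [hβ, hε]; field_simp; ring
  have hk2 : (k : ℝ) ≤ (2 - γ) * n - 1 := by
    have h : β * n + 2 ≤ (β + ε) * n - 1 := by nlinarith
    rw [hβε] at h; linarith
  have hnn0 : (0:ℝ) ≤ (n : ℝ) := Nat.cast_nonneg n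
  have hknR : (k : ℝ) < (n : ℝ) := by nlinarith
  have hkn : k < n := by exact_mod_cast hknR
  have hkR : (1:ℝ) ≤ (k : ℝ) := by
    by_contra hc
    push_neg at hc
    have : (k:ℝ) = 0 := by
      have : k = 0 := by exact_mod_cast Nat.lt_one_iff.mp (by exact_mod_cast hc)
      simp [this]
    nlinarith
  set m : ℕ := n - k with hmdef
  have hmcast : (m : ℝ) = (n : ℝ) - (k : ℝ) := by
    rw [hmdef]; push_cast [Nat.cast_sub hkn.le]; ring
  have hmR : (1:ℝ) ≤ (m : ℝ) := by
    have : 1 ≤ m := by omega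
    exact_mod_cast this
  set δB : ℝ := 1 / (3 * k) with hδB
  set δA : ℝ := 1 / (3 * m) with hδA
  have hδBpos : 0 < δB := by rw [hδB]; positivity
  have hδApos : 0 < δA := by rw [hδA]; positivity
  have hδBle : δB ≤ 1 / 3 := by
    rw [hδB]; rw [div_le_div_iff₀ (by linarith) (by norm_num)]; linarith
  have hδAle : δA ≤ 1 / 3 := by
    rw [hδA]; rw [div_le_div_iff₀ (by linarith) (by norm_num)]; linarith
  have hkne : (k : ℝ) ≠ 0 := by linarith
  have hmne : (m : ℝ) ≠ 0 := by linarith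
  have hkδ : (k : ℝ) * δB = 1 / 3 := by
    rw [hδB]; field_simp
  have hmδ : (m : ℝ) * δA = 1 / 3 := by
    rw [hδA]; field_simp
  set xB : Fin n → ℝ := fun i => if (i : ℕ) < k then 1 - δB else 2 with hxB
  set xA : Fin n → ℝ := fun i => if (i : ℕ) < k then 0 else 1 + δA with hxA
  have hxBbd : ∀ i, 0 ≤ xB i ∧ xB i ≤ 2 := by
    intro i; rw [hxB]; by_cases h : (i:ℕ) < k <;> simp only [h, if_true, if_false] <;>
      constructor <;> linarith
  have hxAbd : ∀ i, 0 ≤ xA i ∧ xA i ≤ 2 := by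
    intro i; rw [hxA]; by_cases h : (i:ℕ) < k <;> simp only [h, if_true, if_false] <;>
      constructor <;> linarith
  have hside : ∀ i, 0 < (1 - xB i) * (1 - xA i) := by
    intro i; rw [hxB, hxA]; by_cases h : (i:ℕ) < k <;>
      simp only [h, if_true, if_false] <;> nlinarith
  have hS : (M xA).1 + (M xA).2 = (M xB).1 + (M xB).2 :=
    sum_cell_const M hM hSP xB xA hxBbd hxAbd hside
  have h0mem : (0:ℝ) ∈ ({0, 2} : Set ℝ) := by left; rfl
  have h2mem : (2:ℝ) ∈ ({0, 2} : Set ℝ) := by right; rfl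
  -- welfare computations at xB
  have hswB : ∀ y : ℝ × ℝ, y.1 ∈ ({0, 2} : Set ℝ) → y.2 ∈ ({0, 2} : Set ℝ) →
      sw xB y = (k : ℝ) * ((y.1 + y.2) + (2 - (y.1 + y.2)) * (1 - δB))
        + (m : ℝ) * ((y.1 + y.2) + (2 - (y.1 + y.2)) * 2) := by
    intro y hy1 hy2
    rw [hxB, sw_split hkn.le (1 - δB) 2 y,
        util_formula (1 - δB) (by linarith) (by linarith) y hy1 hy2,
        util_formula 2 (by norm_num) (by norm_num) y hy1 hy2]
  have hswA : ∀ y : ℝ × ℝ, y.1 ∈ ({0, 2} : Set ℝ) → y.2 ∈ ({0, 2} : Set ℝ) →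
      sw xA y = (k : ℝ) * ((y.1 + y.2) + (2 - (y.1 + y.2)) * 0)
        + (m : ℝ) * ((y.1 + y.2) + (2 - (y.1 + y.2)) * (1 + δA)) := by
    intro y hy1 hy2
    rw [hxA, sw_split hkn.le 0 (1 + δA) y,
        util_formula 0 (by norm_num) (by norm_num) y hy1 hy2,
        util_formula (1 + δA) (by linarith) (by linarith) y hy1 hy2]
  have hK1 : (γ - 1) * n + (γ + 1) ≤ (γ + 1) * (k : ℝ) := by
    have hβmul : β * (γ + 1) = γ - 1 := by
      rw [hβ]; field_simp
    have h := mul_le_mul_of_nonneg_right hk1 hγp.le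
    nlinarith [h, hβmul]
  have hMB1 := (hM xB).1
  have hMB2 := (hM xB).2
  have hswMB := hswB (M xB) hMB1 hMB2
  simp only [Set.mem_insert_iff, Set.mem_singleton_iff] at hMB1 hMB2
  rcases hMB1 with e1 | e1 <;> rcases hMB2 with e2 | e2
  · -- class 0 : both facilities at 0 on the cell; use profile xA and y = (2,2)
    refine ⟨xA, (2, 2), h2mem, h2mem, ?_⟩
    have hsum0 : (M xA).1 + (M xA).2 = 0 := by rw [hS, e1, e2]; norm_num
    have hswM := hswA (M xA) (hM xA).1 (hM xA).2
    rw [hsum0] at hswM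
    have hvM : sw xA (M xA) = 2 * (m:ℝ) + 2/3 := by
      rw [hswM]; linear_combination 2 * hmδ
    have hvY : sw xA (2, 2) = 4 * (k:ℝ) + 2 * (m:ℝ) - 2/3 := by
      rw [hswA (2, 2) h2mem h2mem]; norm_num; linear_combination (-2) * hmδ
    rw [hvM, hvY]
    have hγm : γ * (m : ℝ) = γ * n - γ * k := by rw [hmcast]; ring
    linarith [hK1, hγm, hmcast, hγ1]
  · -- class 2
    refine ⟨xB, (0, 0), h0mem, h0mem, ?_⟩
    have hvM : sw xB (M xB) = 2 * (n:ℝ) := by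
      rw [hswMB, e1, e2]; linear_combination 2 * hmcast
    have hvY : sw xB (0, 0) = 2 * (k:ℝ) - 2/3 + 4 * (m:ℝ) := by
      rw [hswB (0, 0) h0mem h0mem]; norm_num; linear_combination (-2) * hkδ
    rw [hvM, hvY]
    linarith [hk2, hmcast]
  · -- class 2
    refine ⟨xB, (0, 0), h0mem, h0mem, ?_⟩
    have hvM : sw xB (M xB) = 2 * (n:ℝ) := by
      rw [hswMB, e1, e2]; linear_combination 2 * hmcast
    have hvY : sw xB (0, 0) = 2 * (k:ℝ) - 2/3 + 4 * (m:ℝ) := by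
      rw [hswB (0, 0) h0mem h0mem]; norm_num; linear_combination (-2) * hkδ
    rw [hvM, hvY]
    linarith [hk2, hmcast]
  · -- class 4 : both at 2; use profile xB and y = (0,0)
    refine ⟨xB, (0, 0), h0mem, h0mem, ?_⟩
    have hvM : sw xB (M xB) = 2 * (k:ℝ) + 2/3 := by
      rw [hswMB, e1, e2]; linear_combination 2 * hkδ
    have hvY : sw xB (0, 0) = 2 * (k:ℝ) - 2/3 + 4 * (m:ℝ) := by
      rw [hswB (0, 0) h0mem h0mem]; norm_num; linear_combination (-2) * hkδ
    rw [hvM, hvY]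
    have h2' := mul_le_mul_of_nonneg_right hk2 hγp.le
    have hsq : 0 ≤ (γ ^ 2 - γ) * n :=
      mul_nonneg (by nlinarith) (Nat.cast_nonneg n)
    linarith [h2', hsq, hmcast, hγ1]
end

section
/- The bound (5+4√2)/7 for the Uniform-Statistic mechanism is tight: for every δ > 0 there exist an even number of agents n and a position profile x with candidate multiset A = {0,0,2,2} such that the maximum social welfare over all solutions (y_1,y_2) ∈ {0,2}² is at least ((5+4√2)/7 − δ) times the expected social welfare (2/n) · Σ_{k=1}^{n/2} SW(M_{k/n}(x)) of the Uniform-Statistic mechanism on x. -/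
/-- On a profile of `m` zeros followed by ones, the `k`-th smallest is `0` for `k ≤ m`
and `1` afterwards. -/
lemma kth_val_aux (n m k : ℕ) (hk1 : 1 ≤ k) (hkn : k ≤ n) :
    kthSmallest (fun i : Fin n => if (i : ℕ) < m then (0:ℝ) else 1) k
      = if k ≤ m then 0 else 1 := by
  set x : Fin n → ℝ := fun i => if (i : ℕ) < m then (0:ℝ) else 1 with hx
  have hsorted : (List.ofFn x).Pairwise (· ≤ ·) := by
    rw [List.pairwise_ofFn]
    intro i j hij
    simp only [hx]
    split_ifs <;> norm_num
    omega
  have hlen : k - 1 < (List.ofFn x).length := by simp; omega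
  rw [kthSmallest, hsorted.insertionSort_eq, (List.ofFn x).getD_eq_getElem 0 hlen]
  rw [List.getElem_ofFn]
  simp only [hx, Fin.cast_mk]
  by_cases h : k ≤ m
  · rw [if_pos (by omega : k - 1 < m), if_pos h]
  · rw [if_neg (by omega : ¬ (k - 1 < m)), if_neg h]

/-- Sum of a step function over `Fin n`. -/
lemma indsum_aux (n m : ℕ) (hm : m ≤ n) (c d : ℝ) :
    ∑ i : Fin n, (if (i : ℕ) < m then c else d) = m * c + ((n - m : ℕ) : ℝ) * d := by
  rw [Fin.sum_univ_eq_sum_range (fun i => if i < m then c else d)]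
  rw [Finset.range_eq_Ico, ← Finset.sum_Ico_consecutive _ (Nat.zero_le m) hm]
  rw [Finset.sum_congr rfl (g := fun _ => c)
      (fun i hi => if_pos (Finset.mem_Ico.1 hi).2),
    Finset.sum_congr rfl (g := fun _ => d)
      (fun i hi => if_neg (by have := (Finset.mem_Ico.1 hi).1; omega))]
  simp [Nat.card_Ico, mul_comm]

set_option maxHeartbeats 1000000 in
/-- The bound `(5 + 4√2)/7` for the Uniform-Statistic mechanism is tight: for every
`δ > 0` there are an even number `n` of agents and a position profile `x`, with
candidate multiset `{0, 0, 2, 2}`, such that the maximum social welfare over all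
solutions is at least `(5 + 4√2)/7 − δ` times the expected social welfare of the
Uniform-Statistic mechanism on `x`. -/
theorem uniformStatistic_tight
    (t s : ℝ → ℝ)
    (ht : FarthestRule ({0, 0, 2, 2} : Multiset ℝ) 0 2 t)
    (hs : SecondFarthestRule ({0, 0, 2, 2} : Multiset ℝ) 0 2 t s)
    (δ : ℝ) (hδ : 0 < δ) :
    ∃ n : ℕ, Even n ∧ 0 < n ∧ ∃ x : Fin n → ℝ, ∃ y : ℝ × ℝ,
      y.1 ∈ ({0, 2} : Set ℝ) ∧ y.2 ∈ ({0, 2} : Set ℝ) ∧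
      ((5 + 4 * Real.sqrt 2) / 7 - δ) *
          (2 / (n : ℝ) * ∑ k ∈ Finset.Icc 1 (n / 2), sw x (alphaStat 0 2 t s k x)) ≤
        sw x y := by
  -- basic facts about √2
  set r : ℝ := Real.sqrt 2 with hrdef
  have hr2 : r ^ 2 = 2 := Real.sq_sqrt (by norm_num)
  have hr0 : 0 ≤ r := Real.sqrt_nonneg 2
  have hrlt : r < 1.42 := by nlinarith
  have hrgt : 1.4 < r := by nlinarith
  -- the values of t and s that we need
  have memA : ∀ a : ℝ, a ∈ ({0, 0, 2, 2} : Multiset ℝ) ↔ a = 0 ∨ a = 2 := by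
    intro a; simp
  have ht0 : t 0 = 2 := by
    obtain ⟨h1, h2, -, -⟩ := ht 0
    have := h2 2 (by rw [memA]; right; rfl)
    rcases (memA _).1 h1 with h | h
    · rw [h] at this; norm_num at this
    · exact h
  have ht1 : t 1 = 0 := by
    obtain ⟨h1, -, h3, -⟩ := ht 1
    apply h3
    rcases (memA _).1 h1 with h | h <;> rw [h] <;> norm_num
  have hs1 : s 1 = 0 := by
    have herase : ({0, 0, 2, 2} : Multiset ℝ).erase (t 1) = {0, 2, 2} := by
      rw [ht1]
      simp only [Multiset.insert_eq_cons, Multiset.erase_cons_head]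
    obtain ⟨h1, -, h3, -⟩ := hs 1
    rw [herase] at h1 h3
    have hmem : s 1 = 0 ∨ s 1 = 2 := by
      simp at h1; tauto
    apply h3
    · simp
    · rcases hmem with h | h <;> rw [h] <;> norm_num
  -- choice of parameters
  set p : ℕ := ⌈Real.sqrt (8 / δ)⌉₊ + 50 with hpdef
  set n : ℕ := 2 * p with hndef
  set m : ℕ := ⌈(r - 1) * (n : ℝ)⌉₊ with hmdef
  have hp50 : 50 ≤ p := Nat.le_add_left 50 _
  have hN : (100 : ℝ) ≤ (n : ℝ) := by
    have : 100 ≤ n := by omega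
    exact_mod_cast this
  have hN0 : (0 : ℝ) < (n : ℝ) := by linarith
  have hm1 : (r - 1) * (n : ℝ) ≤ (m : ℝ) := Nat.le_ceil _
  have hm2 : (m : ℝ) < (r - 1) * (n : ℝ) + 1 :=
    Nat.ceil_lt_add_one (by nlinarith)
  have hP : ((p : ℝ)) = (n : ℝ) / 2 := by
    rw [hndef]; push_cast; ring
  have hmp : m < p := by
    have : (m : ℝ) + 1 ≤ (p : ℝ) := by rw [hP]; nlinarith
    exact_mod_cast (by linarith : (m : ℝ) < (p : ℝ))
  have hm0 : 0 < m := Nat.ceil_pos.2 (by nlinarith)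
  have hmn : m ≤ n := by omega
  have hn2 : n / 2 = p := by omega
  -- the profile
  set x : Fin n → ℝ := fun i => if (i : ℕ) < m then (0 : ℝ) else 1 with hxdef
  refine ⟨n, ⟨p, by omega⟩, by omega, x, ((2 : ℝ), (2 : ℝ)), by norm_num, by norm_num, ?_⟩
  have hkth : ∀ k, 1 ≤ k → k ≤ n → kthSmallest x k = if k ≤ m then 0 else 1 :=
    fun k hk1 hkn => kth_val_aux n m k hk1 hkn
  -- mechanism outcomes
  have hstat1 : ∀ k ∈ Finset.Ioc 0 m, alphaStat 0 2 t s k x = ((0 : ℝ), (2 : ℝ)) := by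
    intro k hk
    rw [Finset.mem_Ioc] at hk
    have ha : kthSmallest x k = 0 := by
      rw [hkth k (by omega) (by omega), if_pos hk.2]
    have hb : kthSmallest x (n - k) = 1 := by
      rw [hkth (n - k) (by omega) (by omega), if_neg (by omega)]
    rw [alphaStat, ha, hb, ht0, ht1]
    norm_num
  have hstat2 : ∀ k ∈ Finset.Ioc m p, alphaStat 0 2 t s k x = ((0 : ℝ), (0 : ℝ)) := by
    intro k hk
    rw [Finset.mem_Ioc] at hk
    have ha : kthSmallest x k = 1 := by
      rw [hkth k (by omega) (by omega), if_neg (by omega)]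
    have hb : kthSmallest x (n - k) = 1 := by
      rw [hkth (n - k) (by omega) (by omega), if_neg (by omega)]
    rw [alphaStat, ha, hb, ht1, hs1]
    norm_num
  -- social welfare values
  have hcast : ((n - m : ℕ) : ℝ) = (n : ℝ) - (m : ℝ) := by
    exact Nat.cast_sub hmn
  have hswLR : sw x ((0 : ℝ), (2 : ℝ)) = 2 * (n : ℝ) := by
    rw [sw]
    have : ∀ i : Fin n, util (x i) ((0 : ℝ), (2 : ℝ))
        = if (i : ℕ) < m then (2 : ℝ) else 2 := by
      intro i
      simp only [hxdef, util]
      split_ifs <;> norm_num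
    rw [Finset.sum_congr rfl (fun i _ => this i), indsum_aux n m hmn, hcast]
    ring
  have hswLL : sw x ((0 : ℝ), (0 : ℝ)) = 2 * ((n : ℝ) - (m : ℝ)) := by
    rw [sw]
    have : ∀ i : Fin n, util (x i) ((0 : ℝ), (0 : ℝ))
        = if (i : ℕ) < m then (0 : ℝ) else 2 := by
      intro i
      simp only [hxdef, util]
      split_ifs <;> norm_num
    rw [Finset.sum_congr rfl (fun i _ => this i), indsum_aux n m hmn, hcast]
    ring
  have hswRR : sw x ((2 : ℝ), (2 : ℝ)) = 2 * (n : ℝ) + 2 * (m : ℝ) := by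
    rw [sw]
    have : ∀ i : Fin n, util (x i) ((2 : ℝ), (2 : ℝ))
        = if (i : ℕ) < m then (4 : ℝ) else 2 := by
      intro i
      simp only [hxdef, util]
      split_ifs <;> norm_num
    rw [Finset.sum_congr rfl (fun i _ => this i), indsum_aux n m hmn, hcast]
    ring
  -- the sum over k
  have hsum : ∑ k ∈ Finset.Icc 1 (n / 2), sw x (alphaStat 0 2 t s k x)
      = (m : ℝ) * (2 * (n : ℝ)) + ((n : ℝ) / 2 - (m : ℝ)) * (2 * ((n : ℝ) - (m : ℝ))) := by
    have hIoc : Finset.Icc 1 p = Finset.Ioc 0 p := by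
      ext k; simp only [Finset.mem_Icc, Finset.mem_Ioc]; omega
    rw [hn2, hIoc, ← Finset.sum_Ioc_consecutive _ (Nat.zero_le m) (le_of_lt hmp)]
    have hA : ∑ k ∈ Finset.Ioc 0 m, sw x (alphaStat 0 2 t s k x)
        = ∑ _k ∈ Finset.Ioc 0 m, (2 * (n : ℝ)) :=
      Finset.sum_congr rfl (fun k hk => by rw [hstat1 k hk, hswLR])
    have hB : ∑ k ∈ Finset.Ioc m p, sw x (alphaStat 0 2 t s k x)
        = ∑ _k ∈ Finset.Ioc m p, (2 * ((n : ℝ) - (m : ℝ))) :=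
      Finset.sum_congr rfl (fun k hk => by rw [hstat2 k hk, hswLL])
    rw [hA, hB]
    rw [Finset.sum_const, Finset.sum_const, Nat.card_Ioc, Nat.card_Ioc]
    have h1 : ((m - 0 : ℕ) : ℝ) = (m : ℝ) := by norm_num
    have h2 : ((p - m : ℕ) : ℝ) = (n : ℝ) / 2 - (m : ℝ) := by
      rw [Nat.cast_sub (le_of_lt hmp), hP]
    rw [nsmul_eq_mul, nsmul_eq_mul, h1, h2]
  rw [hsum, hswRR]
  -- final arithmetic
  set N : ℝ := (n : ℝ) with hNdef
  set M : ℝ := (m : ℝ) with hMdef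
  set C : ℝ := (5 + 4 * r) / 7 with hCdef
  set Q : ℝ := N ^ 2 - M * N + 2 * M ^ 2 with hQdef
  set d : ℝ := M - (r - 1) * N with hddef
  have hQsum : 2 / N * (M * (2 * N) + (N / 2 - M) * (2 * (N - M))) = 2 * Q / N := by
    rw [hQdef]; field_simp; ring
  rw [hQsum]
  have hId : C * Q = N ^ 2 + M * N + 2 * C * d ^ 2 := by
    rw [hCdef, hQdef, hddef]
    linear_combination ((16 * M * N + (6 - 8 * r) * N ^ 2) / 7) * hr2
  have hδN2 : 8 ≤ δ * N ^ 2 := by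
    have hsq : Real.sqrt (8 / δ) ≤ N := by
      have h1 : Real.sqrt (8 / δ) ≤ (⌈Real.sqrt (8 / δ)⌉₊ : ℝ) := Nat.le_ceil _
      have h2 : ((⌈Real.sqrt (8 / δ)⌉₊ : ℕ) : ℝ) ≤ (p : ℝ) := by
        have : ⌈Real.sqrt (8 / δ)⌉₊ ≤ p := by rw [hpdef]; omega
        exact_mod_cast this
      have h3 : (p : ℝ) ≤ N := by rw [hNdef]; rw [hP] at h2 ⊢; linarith
      linarith
    have h8 : 8 / δ ≤ N ^ 2 := by
      calc 8 / δ = Real.sqrt (8 / δ) ^ 2 := (Real.sq_sqrt (by positivity)).symm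
        _ ≤ N ^ 2 := by nlinarith [Real.sqrt_nonneg (8 / δ)]
    rw [div_le_iff₀ hδ] at h8
    linarith
  have hd0 : 0 ≤ d := by rw [hddef]; linarith
  have hd1' : d ≤ 1 := by rw [hddef]; linarith
  have hMN' : M ≤ N / 2 := by
    have : (m : ℝ) ≤ (p : ℝ) := by exact_mod_cast le_of_lt hmp
    rw [hMdef]; rw [hP] at this; linarith
  have hN100 : (100 : ℝ) ≤ N := hN
  have hN0' : (0 : ℝ) < N := hN0
  clear_value N M C Q d r
  have hC0 : 0 < C := by rw [hCdef]; nlinarith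
  have hC2 : C ≤ 2 := by rw [hCdef]; nlinarith
  have hQN : N ^ 2 / 2 ≤ Q := by
    rw [hQdef]; nlinarith [sq_nonneg M]
  have h1 : 2 * C * d ^ 2 ≤ 4 := by nlinarith
  have h2 : 4 ≤ δ * Q := by nlinarith
  have key : (C - δ) * (2 * Q) ≤ (2 * N + 2 * M) * N := by nlinarith
  have final : (C - δ) * (2 * Q) / N ≤ 2 * N + 2 * M := by
    rw [div_le_iff₀ hN0']; linarith [key]
  calc (C - δ) * (2 * Q / N) = (C - δ) * (2 * Q) / N := by ring
    _ ≤ 2 * N + 2 * M := final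
end

section
/- In the non-optional setting, the approximation ratio of every randomized strategyproof mechanism is at least 3/2: for every randomized strategyproof mechanism M for 2 agents with candidate multiset A = {0,0,2,2} and every real γ < 3/2, there exists a position profile x ∈ ℝ² such that the maximum of SW(y_1,y_2) over (y_1,y_2) ∈ {0,2}² is at least γ times the expected social welfare of M on x. -/
/-- The (finitely many) solutions available with candidate multiset `{0, 0, 2, 2}`. -/
noncomputable def sols : Finset (ℝ × ℝ) := ({0, 2} : Finset ℝ) ×ˢ ({0, 2} : Finset ℝ)

lemma sum_sols (f : ℝ × ℝ → ℝ) :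
    ∑ y ∈ sols, f y = f (0,0) + f (0,2) + f (2,0) + f (2,2) := by
  rw [sols, Finset.sum_product, Finset.sum_pair (by norm_num : (0:ℝ) ≠ 2),
    Finset.sum_pair (by norm_num : (0:ℝ) ≠ 2), Finset.sum_pair (by norm_num : (0:ℝ) ≠ 2)]
  ring

lemma util_eval (t : ℝ) (h0 : 0 ≤ t) (h2 : t ≤ 2) :
    util t (0,0) = 2*t ∧ util t (0,2) = 2 ∧ util t (2,0) = 2 ∧ util t (2,2) = 4-2*t := by
  have e0 : |t - (0:ℝ)| = t := by rw [sub_zero, abs_of_nonneg h0]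
  have e2 : |t - (2:ℝ)| = 2 - t := by rw [abs_of_nonpos (by linarith)]; ring
  refine ⟨?_, ?_, ?_, ?_⟩
  · show |t - 0| + |t - 0| = 2*t; rw [e0]; ring
  · show |t - 0| + |t - 2| = 2; rw [e0, e2]; ring
  · show |t - 2| + |t - 0| = 2; rw [e0, e2]; ring
  · show |t - 2| + |t - 2| = 4-2*t; rw [e2]; ring

lemma sw_pair (a b : ℝ) (y : ℝ × ℝ) : sw ![a,b] y = util a y + util b y := by
  simp [sw, Fin.sum_univ_two]

/-- When all agents are affected by both facilities, the approximation ratio of any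
randomized strategyproof mechanism is at least `3/2`: for every randomized
strategyproof (in expectation) mechanism `M` for two agents with candidate multiset
`{0, 0, 2, 2}` (given by the probability `M x y` of outputting solution `y` on
profile `x`) and every `γ < 3/2`, there is a position profile on which the optimal
social welfare is at least `γ` times the expected social welfare of `M`. -/
theorem randomized_lower_bound_three_halves
    (M : (Fin 2 → ℝ) → (ℝ × ℝ) → ℝ)
    (hpos : ∀ x y, 0 ≤ M x y)
    (hsupp : ∀ x y, y ∉ sols → M x y = 0)
    (hsum : ∀ x, ∑ y ∈ sols, M x y = 1)
    (hsp : ∀ (x : Fin 2 → ℝ) (i : Fin 2) (x' : ℝ),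
      ∑ y ∈ sols, M (Function.update x i x') y * util (x i) y ≤
        ∑ y ∈ sols, M x y * util (x i) y)
    (γ : ℝ) (hγ : γ < 3 / 2) :
    ∃ x : Fin 2 → ℝ, ∃ y ∈ sols, γ * ∑ z ∈ sols, M x z * sw x z ≤ sw x y := by
  have h00 : ((0:ℝ), (0:ℝ)) ∈ sols := by simp [sols]
  have h22 : ((2:ℝ), (2:ℝ)) ∈ sols := by simp [sols]
  rcases le_or_gt γ 1 with hγ1 | hγ1
  · -- trivial case: profile (1,1), every solution has welfare 4
    refine ⟨![1,1], (0,0), h00, ?_⟩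
    obtain ⟨u1, u2, u3, u4⟩ := util_eval 1 (by norm_num) (by norm_num)
    have hE : ∑ z ∈ sols, M ![1,1] z * sw ![1,1] z = 4 := by
      rw [sum_sols (fun z => M ![1,1] z * sw ![1,1] z)]
      simp only [sw_pair, u1, u2, u3, u4]
      have := hsum ![1,1]
      rw [sum_sols (fun z => M ![1,1] z)] at this
      linear_combination (4:ℝ) * this
    rw [hE, sw_pair, u1]
    nlinarith
  · -- main case: 1 < γ < 3/2
    set ε : ℝ := (3 - 2*γ)/4 with hε
    have hε0 : 0 < ε := by rw [hε]; linarith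
    have hε1 : ε < 1/4 := by rw [hε]; linarith
    by_contra hcon
    push_neg at hcon
    -- utility evaluations
    obtain ⟨a1, a2, a3, a4⟩ := util_eval ε (by linarith) (by linarith)
    obtain ⟨b1, b2, b3, b4⟩ := util_eval (1-ε) (by linarith) (by linarith)
    obtain ⟨c1, c2, c3, c4⟩ := util_eval (1+ε) (by linarith) (by linarith)
    obtain ⟨d1, d2, d3, d4⟩ := util_eval (2-ε) (by linarith) (by linarith)
    -- strategyproofness instances
    have hupd0 : Function.update ![1-ε,1+ε] (0 : Fin 2) ε = ![ε,1+ε] := by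
      funext i; fin_cases i <;> simp [Function.update]
    have hupd1 : Function.update ![1-ε,1+ε] (1 : Fin 2) (2-ε) = ![1-ε,2-ε] := by
      funext i; fin_cases i <;> simp [Function.update]
    have sp1 := hsp ![1-ε,1+ε] 0 ε
    have sp2 := hsp ![1-ε,1+ε] 1 (2-ε)
    rw [hupd0] at sp1
    rw [hupd1] at sp2
    simp only [Matrix.cons_val_zero, Matrix.cons_val_one, Matrix.head_cons] at sp1 sp2
    rw [sum_sols (fun y => M ![ε,1+ε] y * util (1-ε) y),
        sum_sols (fun y => M ![1-ε,1+ε] y * util (1-ε) y)] at sp1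
    rw [sum_sols (fun y => M ![1-ε,2-ε] y * util (1+ε) y),
        sum_sols (fun y => M ![1-ε,1+ε] y * util (1+ε) y)] at sp2
    simp only [b1, b2, b3, b4, c1, c2, c3, c4] at sp1 sp2
    -- sums of probabilities
    have hsA := hsum ![ε,1+ε]
    have hsB := hsum ![1-ε,1+ε]
    have hsC := hsum ![1-ε,2-ε]
    rw [sum_sols (fun y => M ![ε,1+ε] y)] at hsA
    rw [sum_sols (fun y => M ![1-ε,1+ε] y)] at hsB
    rw [sum_sols (fun y => M ![1-ε,2-ε] y)] at hsC
    -- the mechanism must be bad on both A = (ε, 1+ε) and C = (1-ε, 2-ε)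
    have hA := hcon ![ε,1+ε] (2,2) h22
    have hC := hcon ![1-ε,2-ε] (0,0) h00
    rw [sum_sols (fun z => M ![ε,1+ε] z * sw ![ε,1+ε] z)] at hA
    rw [sum_sols (fun z => M ![1-ε,2-ε] z * sw ![1-ε,2-ε] z)] at hC
    simp only [sw_pair, a1, a2, a3, a4, c1, c2, c3, c4, b1, b2, b3, b4, d1, d2, d3, d4]
      at hA hC
    -- abbreviations
    set A0 := M ![ε,1+ε] (0,0); set A3 := M ![ε,1+ε] (2,2)
    set C0 := M ![1-ε,2-ε] (0,0); set C3 := M ![1-ε,2-ε] (2,2)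
    -- key consequence of SP: (A3 - A0) + (C0 - C3) ≤ 0
    have hkey : (A3 - A0) + (C0 - C3) ≤ 0 := by
      by_contra hk
      push_neg at hk
      nlinarith [mul_pos hε0 hk, sp1, sp2, hsB]
    have hγ0 : (0:ℝ) < γ := by linarith
    have hbad : γ * (2 - 4*ε) * ((A3 - A0) + (C0 - C3)) ≤ 0 :=
      mul_nonpos_of_nonneg_of_nonpos (mul_nonneg hγ0.le (by linarith)) hkey
    have hγA : γ * (A0 + M ![ε,1+ε] (0,2) + M ![ε,1+ε] (2,0) + A3) = γ := by
      rw [hsA, mul_one]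
    have hγC : γ * (C0 + M ![1-ε,2-ε] (0,2) + M ![1-ε,2-ε] (2,0) + C3) = γ := by
      rw [hsC, mul_one]
    linarith [hA, hC, hγA, hγC, hbad]
end

section
/- The LR-Stronger-Majority mechanism is strategyproof in the general optional setting: for every position profile x, every agent i and every misreport x_i′ ∈ ℝ, the utility of agent i (computed at her true position x_i) under the solution output on profile x is at least her utility under the solution output on the profile (x_i′, x_{−i}). -/
/-- The LR-Stronger-Majority mechanism. For each facility `j`, among the agents `Nj`
affected by it, `cjL` of them (weakly) prefer `L` over `R` (are at least as far from
`L` as from `R`) and `cjR = |Nj| - cjL` prefer `R`; the preferred location `Pj` of the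
majority is `L` if `cjR ≤ cjL` and `R` otherwise, and the majority set `Sj` has
cardinality `max cjL cjR`. If `2|S₁| − n₁ ≥ 2|S₂| − n₂` (equivalently,
`2|S₁| + n₂ ≥ 2|S₂| + n₁`), facility 1 is placed at `P₁` and facility 2 at the other
location among `L` and `R`; otherwise facility 2 is placed at `P₂` and facility 1 at
the other location. -/
noncomputable def lrStrongerMajority {n : ℕ} (N1 N2 : Finset (Fin n)) (L R : ℝ)
    (x : Fin n → ℝ) : ℝ × ℝ :=
  let c1L := (N1.filter fun i => |x i - R| ≤ |x i - L|).card
  let c1R := N1.card - c1L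
  let c2L := (N2.filter fun i => |x i - R| ≤ |x i - L|).card
  let c2R := N2.card - c2L
  let P1 : ℝ := if c1R ≤ c1L then L else R
  let P2 : ℝ := if c2R ≤ c2L then L else R
  if 2 * max c1L c1R + N2.card ≥ 2 * max c2L c2R + N1.card then
    (P1, if P1 = L then R else L)
  else
    (if P2 = L then R else L, P2)

/-- Utility of an agent at position `xi` in the optional setting: total distance to the
locations of the facilities that affect her (`h1 : i ∈ N1` and `h2 : i ∈ N2`). -/
noncomputable def utilOpt (xi : ℝ) (h1 h2 : Prop) [Decidable h1] [Decidable h2]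
    (y : ℝ × ℝ) : ℝ :=
  (if h1 then |xi - y.1| else 0) + (if h2 then |xi - y.2| else 0)

/-- Social welfare of the solution `y` in the optional setting. -/
noncomputable def swOpt {n : ℕ} (N1 N2 : Finset (Fin n)) (x : Fin n → ℝ)
    (y : ℝ × ℝ) : ℝ :=
  ∑ i, utilOpt (x i) (i ∈ N1) (i ∈ N2) y

def w1cond (n1 n2 a b : ℕ) : Prop :=
  (2 * max b (n2 - b) + n1 ≤ 2 * max a (n1 - a) + n2 ∧ n1 - a ≤ a) ∨
  (¬(2 * max b (n2 - b) + n1 ≤ 2 * max a (n1 - a) + n2) ∧ ¬(n2 - b ≤ b))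

instance (n1 n2 a b : ℕ) : Decidable (w1cond n1 n2 a b) := by
  unfold w1cond; exact inferInstance

noncomputable def cnt {n : ℕ} (S : Finset (Fin n)) (L R : ℝ) (x : Fin n → ℝ) : ℕ :=
  (S.filter fun i => |x i - R| ≤ |x i - L|).card

noncomputable def mech (n1 n2 a b : ℕ) (L R : ℝ) : ℝ × ℝ :=
  let P1 : ℝ := if n1 - a ≤ a then L else R
  let P2 : ℝ := if n2 - b ≤ b then L else R
  if 2 * max a (n1 - a) + n2 ≥ 2 * max b (n2 - b) + n1 then
    (P1, if P1 = L then R else L)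
  else
    (if P2 = L then R else L, P2)

lemma lr_eq_mech {n} (N1 N2 : Finset (Fin n)) (L R : ℝ) (x : Fin n → ℝ) :
    lrStrongerMajority N1 N2 L R x =
      mech N1.card N2.card (cnt N1 L R x) (cnt N2 L R x) L R := rfl

lemma mech_eq (n1 n2 a b : ℕ) (L R : ℝ) (hLR : L ≠ R) :
    mech n1 n2 a b L R =
      (if w1cond n1 n2 a b then L else R, if w1cond n1 n2 a b then R else L) := by
  simp only [mech, w1cond, ge_iff_le]
  split_ifs <;> simp_all <;> omega

lemma w1_dec (n1 n2 a b : ℕ) (h : ¬ w1cond n1 n2 a b) : ¬ w1cond n1 n2 (a - 1) b := by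
  unfold w1cond at *; omega

lemma w1_inc (n1 n2 a b : ℕ) (ha : a < n1) (h : w1cond n1 n2 a b) :
    w1cond n1 n2 (a + 1) b := by
  unfold w1cond at *; omega

lemma w2_dec (n1 n2 a b : ℕ) (h : w1cond n1 n2 a b) : w1cond n1 n2 a (b - 1) := by
  unfold w1cond at *; omega

lemma w2_inc (n1 n2 a b : ℕ) (hb : b < n2) (h : ¬ w1cond n1 n2 a b) :
    ¬ w1cond n1 n2 a (b + 1) := by
  unfold w1cond at *; omega

lemma cnt_update_notMem {n} (S : Finset (Fin n)) (L R : ℝ) (x : Fin n → ℝ)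
    (i : Fin n) (x' : ℝ) (hi : i ∉ S) :
    cnt S L R (Function.update x i x') = cnt S L R x := by
  unfold cnt
  congr 1
  apply Finset.filter_congr
  intro k hk
  rw [Function.update_of_ne (by rintro rfl; exact hi hk) x' x]

lemma cnt_update_mem {n} (S : Finset (Fin n)) (L R : ℝ) (x : Fin n → ℝ)
    (i : Fin n) (x' : ℝ) (hi : i ∈ S) :
    cnt S L R (Function.update x i x') + (if |x i - R| ≤ |x i - L| then 1 else 0) =
      cnt S L R x + (if |x' - R| ≤ |x' - L| then 1 else 0) := by
  classical
  have hS : insert i (S.erase i) = S := Finset.insert_erase hi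
  have hiT : i ∉ S.erase i := Finset.notMem_erase i S
  have key : ∀ (y : Fin n → ℝ),
      cnt S L R y = cnt (S.erase i) L R y + (if |y i - R| ≤ |y i - L| then 1 else 0) := by
    intro y
    have : cnt (insert i (S.erase i)) L R y
        = cnt (S.erase i) L R y + (if |y i - R| ≤ |y i - L| then 1 else 0) := by
      unfold cnt
      rw [Finset.filter_insert]
      split_ifs with h
      · rw [Finset.card_insert_of_notMem (fun hmem => hiT (Finset.mem_of_mem_filter i hmem))]
      · simp
    rwa [hS] at this
  rw [key (Function.update x i x'), key x,
    cnt_update_notMem (S.erase i) L R x i x' hiT, Function.update_self]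
  ring

/-- In the general optional setting, the LR-Stronger-Majority mechanism is
strategyproof: no agent can increase her utility by misreporting her position. -/
theorem lrStrongerMajority_strategyproof
    (n : ℕ) (N1 N2 : Finset (Fin n)) (hcover : ∀ i, i ∈ N1 ∨ i ∈ N2)
    (A : Multiset ℝ) (L R : ℝ) (hLA : L ∈ A) (hRA : R ∈ A)
    (hLmin : ∀ c ∈ A, L ≤ c) (hRmax : ∀ c ∈ A, c ≤ R) (hLR : L < R)
    (x : Fin n → ℝ) (i : Fin n) (x' : ℝ) :
    utilOpt (x i) (i ∈ N1) (i ∈ N2)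
        (lrStrongerMajority N1 N2 L R (Function.update x i x')) ≤
      utilOpt (x i) (i ∈ N1) (i ∈ N2) (lrStrongerMajority N1 N2 L R x) := by
  classical
  have hne : L ≠ R := ne_of_lt hLR
  set y := Function.update x i x' with hy
  rw [lr_eq_mech N1 N2 L R y, lr_eq_mech N1 N2 L R x,
    mech_eq _ _ _ _ _ _ hne, mech_eq _ _ _ _ _ _ hne]
  set n1 := N1.card
  set n2 := N2.card
  set a := cnt N1 L R x with hadef
  set b := cnt N2 L R x with hbdef
  set a' := cnt N1 L R y with hadef'
  set b' := cnt N2 L R y with hbdef'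
  have haN : a ≤ n1 := Finset.card_filter_le _ _
  have haN' : a' ≤ n1 := Finset.card_filter_le _ _
  have hbN : b ≤ n2 := Finset.card_filter_le _ _
  have hbN' : b' ≤ n2 := Finset.card_filter_le _ _
  rcases hcover i with h1 | h2
  · -- i ∈ N1
    have hkey : a' + (if |x i - R| ≤ |x i - L| then 1 else 0) =
        a + (if |x' - R| ≤ |x' - L| then 1 else 0) :=
      cnt_update_mem N1 L R x i x' h1
    by_cases h2 : i ∈ N2
    · -- i in both: utility is |xi-L|+|xi-R| either way
      simp only [utilOpt, if_pos h1, if_pos h2]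
      split_ifs <;> simp <;> linarith [abs_sub_comm (x i) L, abs_sub_comm (x i) R]
    · -- i ∈ N1 only
      have hb : b' = b := cnt_update_notMem N2 L R x i x' h2
      simp only [utilOpt, if_pos h1, if_neg h2, add_zero]
      rw [hb]
      by_cases hP : |x i - R| ≤ |x i - L|
      · -- prefers L; bad outcome is R
        split_ifs with hC' hC hC
        · exact le_refl _
        · -- hC' : w1cond a' b, hC : ¬ w1cond a b : impossible
          exfalso
          by_cases hP' : |x' - R| ≤ |x' - L|
          · have : a' = a := by simp [hP, hP'] at hkey; omega
            exact hC (this ▸ hC')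
          · have : a' = a - 1 := by simp [hP, hP'] at hkey; omega
            exact w1_dec n1 n2 a b hC (this ▸ hC')
        · exact hP
        · exact le_refl _
      · -- prefers R; bad outcome is L
        split_ifs with hC' hC hC
        · exact le_refl _
        · exact le_of_lt (lt_of_not_ge hP)
        · -- ¬hC', hC : impossible
          exfalso
          by_cases hP' : |x' - R| ≤ |x' - L|
          · have ha1 : a' = a + 1 := by simp [hP, hP'] at hkey; omega
            have hlt : a < n1 := by omega
            exact hC' (ha1 ▸ w1_inc n1 n2 a b hlt hC)
          · have : a' = a := by simp [hP, hP'] at hkey; omega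
            exact hC' (this ▸ hC)
        · exact le_refl _
  · -- i ∈ N2
    have hkey : b' + (if |x i - R| ≤ |x i - L| then 1 else 0) =
        b + (if |x' - R| ≤ |x' - L| then 1 else 0) :=
      cnt_update_mem N2 L R x i x' h2
    by_cases h1 : i ∈ N1
    · simp only [utilOpt, if_pos h1, if_pos h2]
      split_ifs <;> simp <;> linarith [abs_sub_comm (x i) L, abs_sub_comm (x i) R]
    · -- i ∈ N2 only
      have ha : a' = a := cnt_update_notMem N1 L R x i x' h1
      simp only [utilOpt, if_neg h1, if_pos h2, zero_add]
      rw [ha]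
      by_cases hP : |x i - R| ≤ |x i - L|
      · -- prefers L; bad outcome for facility 2 is R, i.e. w1cond true
        split_ifs with hC' hC hC
        · exact le_refl _
        ·
          exact hP
        · -- ¬hC', hC : snd y = L, snd x = R: impossible? truth bad R ⇒ misreport R
          exfalso
          by_cases hP' : |x' - R| ≤ |x' - L|
          · have : b' = b := by simp [hP, hP'] at hkey; omega
            exact hC' (this ▸ hC)
          · have : b' = b - 1 := by simp [hP, hP'] at hkey; omega
            exact hC' (this ▸ w2_dec n1 n2 a b hC)
        · exact le_refl _
      · -- prefers R; bad outcome is L i.e. ¬w1cond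
        split_ifs with hC' hC hC
        · exact le_refl _
        ·
          exfalso
          by_cases hP' : |x' - R| ≤ |x' - L|
          · have hb1 : b' = b + 1 := by simp [hP, hP'] at hkey; omega
            have hlt : b < n2 := by omega
            exact (hb1 ▸ w2_inc n1 n2 a b hlt hC) hC'
          · have : b' = b := by simp [hP, hP'] at hkey; omega
            exact hC (this ▸ hC')
        · exact le_of_lt (lt_of_not_ge hP)
        · exact le_refl _
end

section
/- The LR-Stronger-Majority mechanism has approximation ratio at most 3 in the general optional setting: for every position profile x and every solution (y_1,y_2) ∈ A², the social welfare SW(y_1,y_2) is at most 3 times the social welfare of the solution output by the LR-Stronger-Majority mechanism on x. -/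

lemma swOpt_eq {n : ℕ} (N1 N2 : Finset (Fin n)) (x : Fin n → ℝ) (y : ℝ × ℝ) :
    swOpt N1 N2 x y = (∑ i ∈ N1, |x i - y.1|) + ∑ i ∈ N2, |x i - y.2| := by
  unfold swOpt utilOpt
  rw [Finset.sum_add_distrib]
  congr 1 <;> simp [Finset.sum_ite_mem]

lemma pt_max (xi L R yj : ℝ) (h1 : L ≤ yj) (h2 : yj ≤ R) :
    |xi - yj| ≤ max |xi - L| |xi - R| := by
  rcases le_or_gt xi yj with h | h
  · refine le_max_of_le_right ?_
    rw [abs_of_nonpos (by linarith), abs_of_nonpos (by linarith : xi - R ≤ 0)]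
    linarith
  · refine le_max_of_le_left ?_
    rw [abs_of_pos (by linarith), abs_of_pos (by linarith : (0:ℝ) < xi - L)]
    linarith

lemma facility {n : ℕ} (N T : Finset (Fin n)) (hT : T ⊆ N) (L R : ℝ) (hLR : L < R)
    (x : Fin n → ℝ) (yj w w' : ℝ)
    (hww' : (w = L ∧ w' = R) ∨ (w = R ∧ w' = L))
    (hy : L ≤ yj) (hy' : yj ≤ R)
    (hpref : ∀ i ∈ T, |x i - w'| ≤ |x i - w|) :
    (∑ i ∈ N, |x i - yj|) ≤ (∑ i ∈ N, |x i - w|) + (R - L) * ((N \ T).card) ∧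
    (R - L) / 2 * T.card ≤ ∑ i ∈ N, |x i - w| := by
  have hmax : ∀ xi : ℝ, max |xi - L| |xi - R| = max |xi - w| |xi - w'| := by
    intro xi; rcases hww' with ⟨h1, h2⟩ | ⟨h1, h2⟩ <;> subst h1 <;> subst h2
    · rfl
    · rw [max_comm]
  have hDlt : |w - w'| = R - L := by
    rcases hww' with ⟨h1, h2⟩ | ⟨h1, h2⟩ <;> subst h1 <;> subst h2
    · rw [abs_of_nonpos (by linarith)]; ring
    · rw [abs_of_nonneg (by linarith)]
  constructor
  · rw [← Finset.sum_sdiff hT, ← Finset.sum_sdiff hT (f := fun i => |x i - w|)]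
    have h1 : ∀ i ∈ N \ T, |x i - yj| ≤ |x i - w| + (R - L) := by
      intro i _
      have := pt_max (x i) L R yj hy hy'
      rw [hmax] at this
      have htri : |x i - w'| ≤ |x i - w| + (R - L) := by
        calc |x i - w'| ≤ |x i - w| + |w - w'| := abs_sub_le _ _ _
        _ = |x i - w| + (R - L) := by rw [hDlt]
      rcases max_cases |x i - w| |x i - w'| with ⟨he, _⟩ | ⟨he, _⟩ <;>
        rw [he] at this <;> linarith
    have h2 : ∀ i ∈ T, |x i - yj| ≤ |x i - w| := by
      intro i hi
      have := pt_max (x i) L R yj hy hy'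
      rw [hmax, max_eq_left (hpref i hi)] at this
      exact this
    have s1 := Finset.sum_le_sum h1
    have s2 := Finset.sum_le_sum h2
    have : ∑ i ∈ N \ T, (|x i - w| + (R - L)) =
        (∑ i ∈ N \ T, |x i - w|) + (R - L) * (N \ T).card := by
      rw [Finset.sum_add_distrib, Finset.sum_const, nsmul_eq_mul, mul_comm]
    linarith
  · have hlow : ∀ i ∈ T, (R - L) / 2 ≤ |x i - w| := by
      intro i hi
      have htri : |w - w'| ≤ |w - x i| + |x i - w'| := abs_sub_le _ _ _
      rw [hDlt, abs_sub_comm w (x i)] at htri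
      have := hpref i hi
      linarith
    calc (R - L) / 2 * T.card = ∑ _i ∈ T, (R - L) / 2 := by
          rw [Finset.sum_const, nsmul_eq_mul, mul_comm]
      _ ≤ ∑ i ∈ T, |x i - w| := Finset.sum_le_sum hlow
      _ ≤ ∑ i ∈ N, |x i - w| := Finset.sum_le_sum_of_subset_of_nonneg hT
          (fun i _ _ => abs_nonneg _)

lemma key {n : ℕ} (N1 N2 T1 T2 : Finset (Fin n)) (hT1 : T1 ⊆ N1) (hT2 : T2 ⊆ N2)
    (L R : ℝ) (hLR : L < R) (x : Fin n → ℝ) (y w : ℝ × ℝ)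
    (hw : w = (L, R) ∨ w = (R, L))
    (hy1 : L ≤ y.1) (hy1' : y.1 ≤ R) (hy2 : L ≤ y.2) (hy2' : y.2 ≤ R)
    (hpref1 : ∀ i ∈ T1, |x i - w.2| ≤ |x i - w.1|)
    (hpref2 : ∀ i ∈ T2, |x i - w.1| ≤ |x i - w.2|)
    (hcard : N1.card + N2.card ≤ 2 * T1.card + 2 * T2.card) :
    swOpt N1 N2 x y ≤ 3 * swOpt N1 N2 x w := by
  have hw1 : (w.1 = L ∧ w.2 = R) ∨ (w.1 = R ∧ w.2 = L) := by
    rcases hw with h | h <;> subst h <;> simp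
  have hw2 : (w.2 = L ∧ w.1 = R) ∨ (w.2 = R ∧ w.1 = L) := by
    rcases hw1 with ⟨a, b⟩ | ⟨a, b⟩
    · right; exact ⟨b, a⟩
    · left; exact ⟨b, a⟩
  obtain ⟨f1a, f1b⟩ := facility N1 T1 hT1 L R hLR x y.1 w.1 w.2 hw1 hy1 hy1' hpref1
  obtain ⟨f2a, f2b⟩ := facility N2 T2 hT2 L R hLR x y.2 w.2 w.1 hw2 hy2 hy2' hpref2
  rw [swOpt_eq, swOpt_eq]
  have hc1 : ((N1 \ T1).card : ℝ) = (N1.card : ℝ) - T1.card := by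
    rw [Finset.card_sdiff_of_subset hT1]
    have := Finset.card_le_card hT1
    push_cast [Nat.cast_sub this]; ring
  have hc2 : ((N2 \ T2).card : ℝ) = (N2.card : ℝ) - T2.card := by
    rw [Finset.card_sdiff_of_subset hT2]
    have := Finset.card_le_card hT2
    push_cast [Nat.cast_sub this]; ring
  have hcR : (N1.card : ℝ) + N2.card ≤ 2 * T1.card + 2 * T2.card := by
    exact_mod_cast Nat.cast_le.mpr hcard
  have hsdiff : (R - L) * ((N1 \ T1).card : ℝ) + (R - L) * ((N2 \ T2).card : ℝ)
      ≤ (R - L) * T1.card + (R - L) * T2.card := by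
    rw [hc1, hc2]
    have hD : (0:ℝ) ≤ R - L := by linarith
    nlinarith
  nlinarith [f1a, f1b, f2a, f2b, hsdiff]

/-- In the general optional setting, the LR-Stronger-Majority mechanism has
approximation ratio at most 3: every solution has social welfare at most 3 times
the social welfare of the solution output by the mechanism. -/
theorem lrStrongerMajority_approx
    (n : ℕ) (N1 N2 : Finset (Fin n)) (hcover : ∀ i, i ∈ N1 ∨ i ∈ N2)
    (A : Multiset ℝ) (L R : ℝ) (hLA : L ∈ A) (hRA : R ∈ A)
    (hLmin : ∀ c ∈ A, L ≤ c) (hRmax : ∀ c ∈ A, c ≤ R) (hLR : L < R)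
    (x : Fin n → ℝ) (y : ℝ × ℝ) (hy1 : y.1 ∈ A) (hy2 : y.2 ∈ A) :
    swOpt N1 N2 x y ≤ 3 * swOpt N1 N2 x (lrStrongerMajority N1 N2 L R x) := by
  have hy1a := hLmin _ hy1
  have hy1b := hRmax _ hy1
  have hy2a := hLmin _ hy2
  have hy2b := hRmax _ hy2
  set F1 := N1.filter (fun i => |x i - R| ≤ |x i - L|) with hF1
  set F2 := N2.filter (fun i => |x i - R| ≤ |x i - L|) with hF2
  have hF1sub : F1 ⊆ N1 := Finset.filter_subset _ _
  have hF2sub : F2 ⊆ N2 := Finset.filter_subset _ _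
  have hF1le : F1.card ≤ N1.card := Finset.card_le_card hF1sub
  have hF2le : F2.card ≤ N2.card := Finset.card_le_card hF2sub
  have hcsd1 : (N1 \ F1).card = N1.card - F1.card := Finset.card_sdiff_of_subset hF1sub
  have hcsd2 : (N2 \ F2).card = N2.card - F2.card := Finset.card_sdiff_of_subset hF2sub
  -- preference facts
  have hp1L : ∀ i ∈ F1, |x i - R| ≤ |x i - L| := by
    intro i hi; exact (Finset.mem_filter.mp hi).2
  have hp2L : ∀ i ∈ F2, |x i - R| ≤ |x i - L| := by
    intro i hi; exact (Finset.mem_filter.mp hi).2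
  have hp1R : ∀ i ∈ N1 \ F1, |x i - L| ≤ |x i - R| := by
    intro i hi
    obtain ⟨hiN, hiF⟩ := Finset.mem_sdiff.mp hi
    by_contra h
    exact hiF (Finset.mem_filter.mpr ⟨hiN, by linarith [abs_nonneg (x i - L)] ⟩)
  have hp2R : ∀ i ∈ N2 \ F2, |x i - L| ≤ |x i - R| := by
    intro i hi
    obtain ⟨hiN, hiF⟩ := Finset.mem_sdiff.mp hi
    by_contra h
    exact hiF (Finset.mem_filter.mpr ⟨hiN, by linarith [abs_nonneg (x i - L)] ⟩)
  have hRneL : ¬ (R = L) := hLR.ne'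
  simp only [lrStrongerMajority, ← hF1, ← hF2]
  split_ifs with hcond h1 h2 h3 h4
  · -- hcond, c1R ≤ c1L : w = (L, R), T1 = F1, T2 = N2 \ F2
    refine key N1 N2 F1 (N2 \ F2) hF1sub (Finset.sdiff_subset) L R hLR x y (L, R)
      (Or.inl rfl) hy1a hy1b hy2a hy2b hp1L hp2R ?_
    rw [hcsd2]
    rw [max_eq_left h1] at hcond
    set m2 := F2.card ⊔ (N2.card - F2.card) with hm2
    have h2a : F2.card ≤ m2 := le_max_left _ _
    omega
  · exact absurd rfl h2
  · -- hcond, ¬(c1R ≤ c1L) : w = (R, L), T1 = N1 \ F1, T2 = F2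
    refine key N1 N2 (N1 \ F1) F2 (Finset.sdiff_subset) hF2sub L R hLR x y (R, L)
      (Or.inr rfl) hy1a hy1b hy2a hy2b hp1R hp2L ?_
    rw [hcsd1]
    rw [max_eq_right (Nat.le_of_not_le h1)] at hcond
    set m2 := F2.card ⊔ (N2.card - F2.card) with hm2
    have h2a : N2.card - F2.card ≤ m2 := le_max_right _ _
    omega
  · -- ¬hcond, c2R ≤ c2L : w = (R, L), T1 = N1 \ F1, T2 = F2
    refine key N1 N2 (N1 \ F1) F2 (Finset.sdiff_subset) hF2sub L R hLR x y (R, L)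
      (Or.inr rfl) hy1a hy1b hy2a hy2b hp1R hp2L ?_
    rw [hcsd1]
    rw [max_eq_left h3] at hcond
    set m1 := F1.card ⊔ (N1.card - F1.card) with hm1
    have h1a : F1.card ≤ m1 := le_max_left _ _
    omega
  · exact absurd rfl h4
  · -- ¬hcond, ¬(c2R ≤ c2L) : w = (L, R), T1 = F1, T2 = N2 \ F2
    refine key N1 N2 F1 (N2 \ F2) hF1sub (Finset.sdiff_subset) L R hLR x y (L, R)
      (Or.inl rfl) hy1a hy1b hy2a hy2b hp1L hp2R ?_
    rw [hcsd2]
    rw [max_eq_right (Nat.le_of_not_le h3)] at hcond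
    set m1 := F1.card ⊔ (N1.card - F1.card) with hm1
    have h1a : N1.card - F1.card ≤ m1 := le_max_right _ _
    omega
end

section
/- The approximation ratio of every deterministic strategyproof mechanism in the general optional setting is at least 3; this holds already for a single obnoxious facility: for every deterministic strategyproof mechanism M for 2 agents with candidate set {0,2} (placing one facility that affects both agents) and every real γ < 3, there exists a position profile x ∈ ℝ² such that max over y ∈ {0,2} of Σ_i |x_i−y| is at least γ · Σ_i |x_i − M(x)|. -/
/-- The approximation ratio of every deterministic strategyproof mechanism in the
general optional setting is at least 3; this holds already for a single obnoxious
facility affecting both of two agents, with candidate locations `{0, 2}`: for every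
deterministic strategyproof mechanism `M` and every `γ < 3`, on some position profile
the optimal social welfare is at least `γ` times that of the location chosen by `M`. -/
theorem single_facility_lower_bound_three
    (M : (Fin 2 → ℝ) → ℝ)
    (hrange : ∀ x, M x ∈ ({0, 2} : Set ℝ))
    (hsp : ∀ (x : Fin 2 → ℝ) (i : Fin 2) (x' : ℝ),
      |x i - M (Function.update x i x')| ≤ |x i - M x|)
    (γ : ℝ) (hγ : γ < 3) :
    ∃ x : Fin 2 → ℝ, ∃ y ∈ ({0, 2} : Set ℝ),
      γ * ∑ i, |x i - M x| ≤ ∑ i, |x i - y| := by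
  rcases le_or_gt γ 1 with h1 | h1
  · -- trivial case: γ ≤ 1, take y = M x
    refine ⟨fun _ => 1, M (fun _ => 1), hrange _, ?_⟩
    have hS : (0:ℝ) ≤ ∑ i : Fin 2, |(fun _ => (1:ℝ)) i - M (fun _ => 1)| := by
      positivity
    nlinarith [hS]
  · set ε := (3 - γ) / (1 + γ) with hεdef
    have hγ0 : (0:ℝ) < 1 + γ := by linarith
    have hε0 : 0 < ε := div_pos (by linarith) hγ0
    have hε1 : ε < 1 := by rw [hεdef, div_lt_one hγ0]; linarith
    have hkey : γ * (1 + ε) = 3 - ε := by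
      rw [hεdef]; field_simp; ring
    set x1 : Fin 2 → ℝ := ![2, 1 - ε] with hx1
    set x2 : Fin 2 → ℝ := ![1 + ε, 0] with hx2
    have hx10 : x1 0 = 2 := rfl
    have hx11 : x1 1 = 1 - ε := rfl
    have hx20 : x2 0 = 1 + ε := rfl
    have hx21 : x2 1 = 0 := rfl
    have hM1 := hrange x1
    simp only [Set.mem_insert_iff, Set.mem_singleton_iff] at hM1
    rcases hM1 with hM1 | hM1
    · have hM2 := hrange x2
      simp only [Set.mem_insert_iff, Set.mem_singleton_iff] at hM2
      rcases hM2 with hM2 | hM2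
      · -- trap T4: M (1+ε, 0) = 0, take y = 2
        refine ⟨x2, 2, by simp, ?_⟩
        rw [Fin.sum_univ_two, Fin.sum_univ_two, hM2, hx20, hx21]
        rw [abs_of_nonneg (by linarith : (0:ℝ) ≤ 1 + ε - 0),
            abs_of_nonneg (le_refl (0:ℝ) |>.trans (by norm_num) : (0:ℝ) ≤ (0:ℝ) - 0),
            abs_of_nonpos (by linarith : 1 + ε - 2 ≤ (0:ℝ)),
            abs_of_nonpos (by norm_num : (0:ℝ) - 2 ≤ 0)]
        linarith [hkey]
      · -- contradiction case: M x1 = 0 and M x2 = 2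
        exfalso
        set x3 : Fin 2 → ℝ := ![2, 0] with hx3
        have hu1 : Function.update x1 1 0 = x3 := by
          funext i; fin_cases i <;> simp [hx1, hx3, Function.update]
        have hu2 : Function.update x2 0 2 = x3 := by
          funext i; fin_cases i <;> simp [hx2, hx3, Function.update]
        have hsp1 := hsp x1 1 0
        rw [hu1, hM1, hx11] at hsp1
        rw [abs_of_nonneg (by linarith : (0:ℝ) ≤ 1 - ε - 0)] at hsp1
        have hM3 : M x3 = 0 := by
          have h := hrange x3
          simp only [Set.mem_insert_iff, Set.mem_singleton_iff] at h
          rcases h with h | h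
          · exact h
          · exfalso
            rw [h, abs_of_nonpos (by linarith : 1 - ε - 2 ≤ (0:ℝ))] at hsp1
            linarith
        have hsp2 := hsp x2 0 2
        rw [hu2, hM2, hM3, hx20] at hsp2
        rw [abs_of_nonneg (by linarith : (0:ℝ) ≤ 1 + ε - 0),
            abs_of_nonpos (by linarith : 1 + ε - 2 ≤ (0:ℝ))] at hsp2
        linarith
    · -- trap T1: M (2, 1-ε) = 2, take y = 0
      refine ⟨x1, 0, by simp, ?_⟩
      rw [Fin.sum_univ_two, Fin.sum_univ_two, hM1, hx10, hx11]
      rw [abs_of_nonneg (by norm_num : (0:ℝ) ≤ 2 - 2),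
          abs_of_nonpos (by linarith : 1 - ε - 2 ≤ (0:ℝ)),
          abs_of_nonneg (by norm_num : (0:ℝ) ≤ 2 - 0),
          abs_of_nonneg (by linarith : (0:ℝ) ≤ 1 - ε - 0)]
      linarith [hkey]
end

section
/- The Equiprobable-LR mechanism, which places facilities at (L,R) and at (R,L) each with probability 1/2, has approximation ratio at most 2 in the general optional setting: for every position profile x and every solution (y_1,y_2) ∈ A², SW(y_1,y_2) ≤ 2 · [ Σ_{i : p_{i,1}=p_{i,2}=1} (|x_i−L| + |x_i−R|) + (1/2) · Σ_{i : p_{i,1}+p_{i,2}=1} (|x_i−L| + |x_i−R|) ], where the bracketed quantity is the expected social welfare of Equiprobable-LR. -/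
lemma abs_le_sum_abs (xi y L R : ℝ) (hL : L ≤ y) (hR : y ≤ R) :
    |xi - y| ≤ |xi - L| + |xi - R| := by
  rcases le_total xi y with h | h
  · have h1 : |xi - y| = y - xi := by rw [abs_sub_comm]; exact abs_of_nonneg (by linarith)
    have h2 : R - xi ≤ |xi - R| := by rw [abs_sub_comm]; exact le_abs_self _
    have := abs_nonneg (xi - L)
    linarith
  · have h1 : |xi - y| = xi - y := abs_of_nonneg (by linarith)
    have h2 : xi - L ≤ |xi - L| := le_abs_self _
    have := abs_nonneg (xi - R)
    linarith

/-- In the general optional setting, the Equiprobable-LR mechanism, which places the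
facilities at `(L, R)` and at `(R, L)` each with probability `1/2`, has approximation
ratio at most 2: every solution has social welfare at most twice the expected social
welfare of the mechanism, which equals the bracketed quantity
`Σ_{i ∈ N1 ∩ N2} (|xᵢ − L| + |xᵢ − R|) + (1/2)·Σ_{i in exactly one of N1, N2} (|xᵢ − L| + |xᵢ − R|)`. -/
theorem equiprobableLR_approx
    (n : ℕ) (N1 N2 : Finset (Fin n)) (hcover : ∀ i, i ∈ N1 ∨ i ∈ N2)
    (A : Multiset ℝ) (L R : ℝ) (hLA : L ∈ A) (hRA : R ∈ A)
    (hLmin : ∀ c ∈ A, L ≤ c) (hRmax : ∀ c ∈ A, c ≤ R)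
    (x : Fin n → ℝ) (y : ℝ × ℝ) (hy1 : y.1 ∈ A) (hy2 : y.2 ∈ A) :
    swOpt N1 N2 x y ≤
      2 * (∑ i ∈ N1 ∩ N2, (|x i - L| + |x i - R|) +
        1 / 2 * ∑ i ∈ (N1 ∪ N2) \ (N1 ∩ N2), (|x i - L| + |x i - R|)) := by
  have hb1 : ∀ i : Fin n, |x i - y.1| ≤ |x i - L| + |x i - R| := fun i =>
    abs_le_sum_abs _ _ _ _ (hLmin _ hy1) (hRmax _ hy1)
  have hb2 : ∀ i : Fin n, |x i - y.2| ≤ |x i - L| + |x i - R| := fun i =>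
    abs_le_sum_abs _ _ _ _ (hLmin _ hy2) (hRmax _ hy2)
  have hsplit : (Finset.univ : Finset (Fin n)) =
      (N1 ∩ N2) ∪ ((N1 ∪ N2) \ (N1 ∩ N2)) := by
    ext i
    simp only [Finset.mem_univ, Finset.mem_union, Finset.mem_inter, Finset.mem_sdiff, true_iff]
    rcases hcover i with h | h <;> tauto
  have hdisj : Disjoint (N1 ∩ N2) ((N1 ∪ N2) \ (N1 ∩ N2)) :=
    Finset.disjoint_sdiff
  rw [swOpt, hsplit, Finset.sum_union hdisj]
  have hA : ∑ i ∈ N1 ∩ N2, utilOpt (x i) (i ∈ N1) (i ∈ N2) y ≤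
      ∑ i ∈ N1 ∩ N2, 2 * (|x i - L| + |x i - R|) := by
    apply Finset.sum_le_sum
    intro i hi
    simp only [Finset.mem_inter] at hi
    rw [utilOpt, if_pos hi.1, if_pos hi.2]
    have := hb1 i; have := hb2 i
    linarith
  have hB : ∑ i ∈ (N1 ∪ N2) \ (N1 ∩ N2), utilOpt (x i) (i ∈ N1) (i ∈ N2) y ≤
      ∑ i ∈ (N1 ∪ N2) \ (N1 ∩ N2), (|x i - L| + |x i - R|) := by
    apply Finset.sum_le_sum
    intro i hi
    simp only [Finset.mem_sdiff, Finset.mem_union, Finset.mem_inter] at hi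
    rw [utilOpt]
    have := hb1 i; have := hb2 i
    by_cases h1 : i ∈ N1 <;> by_cases h2 : i ∈ N2 <;>
      simp_all <;> linarith
  rw [← Finset.mul_sum] at hA
  linarith
end

section
/- Let L ≤ ℓ ≤ R be reals, let x_1,…,x_n ∈ [L,R], and let S ⊆ {1,…,n} be a set of agents such that |x_k − ℓ| ≤ |x_k − R| for every k ∈ S. Then Σ_{k=1}^n (|x_k − L| + |x_k − ℓ|) ≤ (2n − |S|) · (R − L). -/
/-- Welfare bound for case (A) of the analysis of the α-Statistic mechanism: if all
agents lie in `[L, R]` with `L ≤ ℓ ≤ R`, and every agent in `S` is at least as far from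
`R` as from `ℓ`, then the social welfare of the solution `(L, ℓ)` is at most
`(2n − |S|)·(R − L)`. -/
theorem welfare_bound_caseA
    (n : ℕ) (L ℓ R : ℝ) (hLl : L ≤ ℓ) (hlR : ℓ ≤ R)
    (x : Fin n → ℝ) (hx : ∀ k, x k ∈ Set.Icc L R)
    (S : Finset (Fin n)) (hS : ∀ k ∈ S, |x k - ℓ| ≤ |x k - R|) :
    ∑ k, (|x k - L| + |x k - ℓ|) ≤ (2 * (n : ℝ) - S.card) * (R - L) := by
  have key : ∀ k, (|x k - L| + |x k - ℓ|) ≤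
      (if k ∈ S then (R - L) else 2 * (R - L)) := by
    intro k
    obtain ⟨h1, h2⟩ := hx k
    have hL : |x k - L| = x k - L := abs_of_nonneg (by linarith)
    by_cases hk : k ∈ S
    · have hR : |x k - R| = R - x k := by
        rw [abs_sub_comm]; exact abs_of_nonneg (by linarith)
      have := hS k hk
      simp only [hk, if_true]
      rw [hL]; rw [hR] at this; linarith
    · have hl : |x k - ℓ| ≤ R - L := by
        rw [abs_sub_le_iff]; constructor <;> linarith
      simp only [hk, if_false]
      rw [hL]; linarith
  have hcard : S.card ≤ n := by
    simpa using Finset.card_le_univ S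
  calc ∑ k, (|x k - L| + |x k - ℓ|)
      ≤ ∑ k, (if k ∈ S then (R - L) else 2 * (R - L)) :=
        Finset.sum_le_sum fun k _ => key k
    _ = (2 * (n : ℝ) - S.card) * (R - L) := by
        rw [Finset.sum_ite, Finset.sum_const, Finset.sum_const]
        have h1 : (Finset.univ.filter (· ∈ S)) = S := by
          simp
        have h2 : (Finset.univ.filter (fun k => ¬ k ∈ S)).card = n - S.card := by
          simp [Finset.filter_not, Finset.card_sdiff]
        rw [h1, h2]
        have : ((n - S.card : ℕ) : ℝ) = (n : ℝ) - S.card := by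
          push_cast [hcard]; ring
        simp only [nsmul_eq_mul, this]
        ring
end

section
/- Let L ≤ r ≤ R be reals, let x_1,…,x_n ∈ [L,R], and let T ⊆ {1,…,n} be a set of agents such that |x_k − R| ≤ |x_k − L| for every k ∈ T. Then Σ_{k=1}^n (|x_k − r| + |x_k − R|) ≤ (2n − |T|) · (R − L). -/
/-- Welfare bound for case (B) of the analysis of the α-Statistic mechanism: if all
agents lie in `[L, R]` with `L ≤ r ≤ R`, and every agent in `T` is at least as far from
`L` as from `R`, then the social welfare of the solution `(r, R)` is at most
`(2n − |T|)·(R − L)`. -/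
theorem welfare_bound_caseB
    (n : ℕ) (L r R : ℝ) (hLr : L ≤ r) (hrR : r ≤ R)
    (x : Fin n → ℝ) (hx : ∀ k, x k ∈ Set.Icc L R)
    (T : Finset (Fin n)) (hT : ∀ k ∈ T, |x k - R| ≤ |x k - L|) :
    ∑ k, (|x k - r| + |x k - R|) ≤ (2 * (n : ℝ) - T.card) * (R - L) := by
  have key : ∀ k, |x k - r| + |x k - R| ≤
      2 * (R - L) - (if k ∈ T then (R - L) else 0) := by
    intro k
    obtain ⟨h1, h2⟩ := hx k
    by_cases hk : k ∈ T
    · simp only [hk, if_true]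
      have hmid : L + R ≤ 2 * x k := by
        have := hT k hk
        rcases abs_cases (x k - R) with ⟨e1, _⟩ | ⟨e1, _⟩ <;>
          rcases abs_cases (x k - L) with ⟨e2, _⟩ | ⟨e2, _⟩ <;> nlinarith
      rcases abs_cases (x k - r) with ⟨e1, _⟩ | ⟨e1, _⟩ <;>
        rcases abs_cases (x k - R) with ⟨e2, _⟩ | ⟨e2, _⟩ <;> nlinarith
    · simp only [hk, if_false]
      rcases abs_cases (x k - r) with ⟨e1, _⟩ | ⟨e1, _⟩ <;>
        rcases abs_cases (x k - R) with ⟨e2, _⟩ | ⟨e2, _⟩ <;> nlinarith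
  calc ∑ k, (|x k - r| + |x k - R|)
      ≤ ∑ k, (2 * (R - L) - (if k ∈ T then (R - L) else 0)) :=
        Finset.sum_le_sum fun k _ => key k
    _ = (2 * (n : ℝ) - T.card) * (R - L) := by
        rw [Finset.sum_sub_distrib, Finset.sum_const, Finset.sum_ite_mem,
          Finset.univ_inter, Finset.sum_const]
        simp [Finset.card_univ]
        ring
end

section
/- Let x_1,…,x_n ∈ ℝ, let m ∈ ℝ be a point minimizing t ↦ Σ_{i=1}^n |x_i − t| over ℝ (e.g., a median of x_1,…,x_n), and let o, w ∈ ℝ satisfy |m − o| ≤ |m − w|. Then Σ_{i=1}^n |x_i − o| ≤ 3 · Σ_{i=1}^n |x_i − w|. -/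
/-- Key lemma behind Case 1 of the 3-approximation analysis of the
LR-Stronger-Majority mechanism: if `m` minimizes the total distance to the points
`x₁, …, xₙ` (e.g., `m` is a median) and `w` is at least as far from `m` as `o`, then
the total distance of the points to `o` is at most three times their total distance
to `w`. -/
theorem median_three_approx
    (n : ℕ) (x : Fin n → ℝ) (m : ℝ)
    (hm : ∀ t : ℝ, ∑ i, |x i - m| ≤ ∑ i, |x i - t|)
    (o w : ℝ) (how : |m - o| ≤ |m - w|) :
    ∑ i, |x i - o| ≤ 3 * ∑ i, |x i - w| := by
  have h1 : ∑ i, |x i - o| ≤ ∑ i, (|x i - m| + |m - o|) := by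
    apply Finset.sum_le_sum
    intro i _
    calc |x i - o| = |(x i - m) + (m - o)| := by ring_nf
    _ ≤ |x i - m| + |m - o| := abs_add_le _ _
  have h2 : ∀ i : Fin n, |m - o| ≤ |x i - m| + |x i - w| := by
    intro i
    calc |m - o| ≤ |m - w| := how
    _ = |(m - x i) + (x i - w)| := by ring_nf
    _ ≤ |m - x i| + |x i - w| := abs_add_le _ _
    _ = |x i - m| + |x i - w| := by rw [abs_sub_comm]
  have h3 : ∑ i, (|x i - m| + |m - o|) ≤ ∑ i, (2 * |x i - m| + |x i - w|) := by
    apply Finset.sum_le_sum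
    intro i _
    have := h2 i
    linarith
  have h4 : ∑ i, (2 * |x i - m| + |x i - w|) = 2 * ∑ i, |x i - m| + ∑ i, |x i - w| := by
    rw [Finset.sum_add_distrib, Finset.mul_sum]
  have h5 := hm w
  linarith
end

section
/- For every real t with 1/2 ≤ t ≤ 1, it holds that 2 − 3t + 2t² > 0 and (2 − t)/(2 − 3t + 2t²) ≤ (5 + 4√2)/7. -/
/-- Algebraic inequality yielding the approximation ratio `(5 + 4√2)/7` of the
Uniform-Statistic mechanism: for `1/2 ≤ t ≤ 1`, the denominator `2 − 3t + 2t²` is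
positive and `(2 − t)/(2 − 3t + 2t²) ≤ (5 + 4√2)/7`. -/
theorem ratio_bound_five_plus_four_sqrt_two
    (t : ℝ) (h1 : 1 / 2 ≤ t) (h2 : t ≤ 1) :
    0 < 2 - 3 * t + 2 * t ^ 2 ∧
      (2 - t) / (2 - 3 * t + 2 * t ^ 2) ≤ (5 + 4 * Real.sqrt 2) / 7 := by
  have hpos : 0 < 2 - 3 * t + 2 * t ^ 2 := by nlinarith [sq_nonneg (t - 3/4)]
  refine ⟨hpos, ?_⟩
  rw [div_le_div_iff₀ hpos (by norm_num)]
  have hs : Real.sqrt 2 ^ 2 = 2 := Real.sq_sqrt (by norm_num)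
  have hs1 : (1:ℝ) ≤ Real.sqrt 2 := by
    nlinarith [Real.sqrt_nonneg 2, hs]
  nlinarith [sq_nonneg (t - (2 - Real.sqrt 2)), Real.sqrt_nonneg 2, hs, hs1]
end
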